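/- There exists a family of invertible formal power series Q_k(i,j) ∈ K[[z,z′]], indexed by k ∈ {1,…,n−1} and pairs (i,j) ∈ S², such that, writing Q_k(i) := Q_k(i_k,i_{k+1})(y_k,y_{k+1}) ∈ K[[y_1,…,y_n]] and X_k(i) := i_k(1 − g(y_k)), the following hold for all i = (i_1,…,i_n) ∈ S^n and 1 ≤ k ≤ n−1: (★1) if i_k = i_{k+1} then Q_k(i)·(g(y_{k+1}) − g(y_k)) = i_k^{−1}(q^{−1}X_k(i) − qX_{k+1}(i))·(y_{k+1} − y_k); (★2) writing D := (X_k(i) − X_{k+1}(i))(X_{k+1}(i) − X_k(i)) and N := (qX_k(i) − q^{−1}X_{k+1}(i))(qX_{k+1}(i) − q^{−1}X_k(i)), one has {}^{r_k}Q_k(r_k(i))·Q_k(i)·D = N if i_k ↮ i_{k+1}; {}^{r_k}Q_k(r_k(i))·Q_k(i)·(y_{k+1}−y_k)·D = N if i_k ← i_{k+1}; {}^{r_k}Q_k(r_k(i))·Q_k(i)·(y_k−y_{k+1})·D = N if i_k → i_{k+1}; and {}^{r_k}Q_k(r_k(i))·Q_k(i)·(y_{k+1}−y_k)(y_k−y_{k+1})·D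 = N if i_k ↔ i_{k+1}; (★3) {}^{r_k}Q_{k+1}(r_{k+1}r_k(i)) = {}^{r_{k+1}}Q_k(r_kr_{k+1}(i)) for 1 ≤ k ≤ n−2. -/

import Mathlib

/-!
Formalization of definitions from:
L. Poulain d'Andecy and R. Walker, "Affine Hecke algebras and generalisations
of quiver Hecke algebras for type B".

Presented algebras are realized as `RingQuot` quotients of free algebras.
-/

open scoped BigOperators Classical

noncomputable section

namespace PdAW

variable {K : Type} [Field K]

/-! ### The eigenvalue sets `I_λ` and `S` -/

/-- `I_λ = {λ^ε q^{2t} : ε ∈ {±1}, t ∈ ℤ}`. -/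
def Iset (q lam : K) : Set K :=
  {x | ∃ ε : ℤ, (ε = 1 ∨ ε = -1) ∧ ∃ t : ℤ, x = lam ^ ε * q ^ (2 * t)}

/-- `S = I_{λ_1} ∪ ⋯ ∪ I_{λ_l}`. -/
def Sset {l : ℕ} (q : K) (lam : Fin l → K) : Set K := ⋃ a, Iset q (lam a)

/-! ### The Weyl group action on tuples -/

variable {n : ℕ}

/-- The simple transposition exchanging the (0-based) entries `c` and `c+1`. -/
def swapMove (c : ℕ) (h : c + 1 < n) (i : Fin n → K) : Fin n → K :=
  i ∘ Equiv.swap ⟨c, Nat.lt_of_succ_lt h⟩ ⟨c + 1, h⟩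

/-- The reflection `r_0`, inverting the first entry. -/
def invMove (h : 0 < n) (i : Fin n → K) : Fin n → K :=
  Function.update i ⟨0, h⟩ (i ⟨0, h⟩)⁻¹

/-- One step of the symmetric-group action. -/
def AStep (i j : Fin n → K) : Prop := ∃ c, ∃ h : c + 1 < n, j = swapMove c h i

/-- One step of the type-B Weyl group action. -/
def BStep (i j : Fin n → K) : Prop := AStep i j ∨ ∃ h : 0 < n, j = invMove h i

/-- `j` lies in the `W(B_n)`-orbit of `i`. -/
def inOrbitB (i j : Fin n → K) : Prop := Relation.ReflTransGen BStep i j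

/-- `β` is an orbit for the action of `W(B_n)`. -/
def IsBOrbit (β : Set (Fin n → K)) : Prop := ∃ i₀ ∈ β, β = {j | inOrbitB i₀ j}

/-- `α` is a union of orbits for the symmetric group action (i.e. is closed under it). -/
def IsAClosed (α : Set (Fin n → K)) : Prop :=
  ∀ i ∈ α, ∀ c, ∀ h : c + 1 < n, swapMove c h i ∈ α

theorem fin_lt (c : Fin (n - 1)) : c.1 + 1 < n := by have := c.2; omega

/-- The 0-based position of the paper's index `b ∈ {1,…,n-1}` (namely `b-1`). -/
def lo (c : Fin (n - 1)) : Fin n := ⟨c.1, Nat.lt_of_succ_lt (fin_lt c)⟩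

/-- The 0-based position `b` for the paper's index `b ∈ {1,…,n-1}`. -/
def hi (c : Fin (n - 1)) : Fin n := ⟨c.1 + 1, fin_lt c⟩

/-- The action of the simple reflection `r_{c+1}` on tuples. -/
def sw (c : Fin (n - 1)) (i : Fin n → K) : Fin n → K := swapMove c.1 (fin_lt c) i

/-! ### Quiver arrows (for the quiver with arrows `i → q²i`) -/

/-- `i → j` : `j = q²i ≠ q⁻²i`. -/
def qarr (q i j : K) : Prop := j = q ^ 2 * i ∧ j ≠ (q ^ 2)⁻¹ * i

/-- `i ← j` : `j = q⁻²i ≠ q²i`. -/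
def qbak (q i j : K) : Prop := j = (q ^ 2)⁻¹ * i ∧ j ≠ q ^ 2 * i

/-- `i ↔ j` : `j = q²i = q⁻²i`. -/
def qdbl (q i j : K) : Prop := j = q ^ 2 * i ∧ j = (q ^ 2)⁻¹ * i

/-- `i ↮ j` : `i ≠ j` and `j ∉ {q²i, q⁻²i}`. -/
def qnon (q i j : K) : Prop := i ≠ j ∧ j ≠ q ^ 2 * i ∧ j ≠ (q ^ 2)⁻¹ * i

/-- `i⁻¹ →ᵖ i` : `i ∈ {±p}` and `i ∉ {±p⁻¹}`. -/
def parr (p i : K) : Prop := (i = p ∨ i = -p) ∧ ¬(i = p⁻¹ ∨ i = -p⁻¹)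

/-- `i⁻¹ ←ᵖ i` : `i ∉ {±p}` and `i ∈ {±p⁻¹}`. -/
def pbak (p i : K) : Prop := ¬(i = p ∨ i = -p) ∧ (i = p⁻¹ ∨ i = -p⁻¹)

/-- `i⁻¹ ↔ᵖ i` : `i ∈ {±p} ∩ {±p⁻¹}`. -/
def pdbl (p i : K) : Prop := (i = p ∨ i = -p) ∧ (i = p⁻¹ ∨ i = -p⁻¹)

/-- `i⁻¹ ↮ᵖ i` : `i ≠ i⁻¹` and `i ∉ {±p, ±p⁻¹}`. -/
def pnon (p i : K) : Prop := i ≠ i⁻¹ ∧ ¬(i = p ∨ i = -p ∨ i = p⁻¹ ∨ i = -p⁻¹)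

/-- The product `∏_{λ ∈ I} (x - λ)^{m(λ)}` (the factors pairwise commute). -/
def polyProd {A : Type} [Ring A] [Algebra K A] (x : A) (I : Finset K) (m : K → ℕ) : A :=
  I.noncommProd (fun lam => (x - algebraMap K A lam) ^ m lam) (by
    intro a _ b _ _
    have h1 : Commute x (algebraMap K A b) := (Algebra.commutes b x).symm
    have h2 : Commute (algebraMap K A a) x := Algebra.commutes a x
    have h3 : Commute (algebraMap K A a) (algebraMap K A b) := Algebra.commutes a _
    exact (((Commute.refl x).sub_right h1).sub_left (h2.sub_right h3)).pow_pow _ _)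

/-! ### The affine Hecke algebra of type A and its cyclotomic quotients -/

/-- Generators of the affine Hecke algebra `Ĥ(A_n)`:
`g c` is the paper's `g_{c+1}` (`c+1 ∈ {1,…,n-1}`), `X k` is `X_{k+1}`, `Xinv k` is `X_{k+1}⁻¹`. -/
inductive AGen (n : ℕ) : Type
  | g : Fin (n - 1) → AGen n
  | X : Fin n → AGen n
  | Xinv : Fin n → AGen n

def ag (c : Fin (n - 1)) : FreeAlgebra K (AGen n) := FreeAlgebra.ι K (AGen.g c)
def aX (k : Fin n) : FreeAlgebra K (AGen n) := FreeAlgebra.ι K (AGen.X k)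
def aXi (k : Fin n) : FreeAlgebra K (AGen n) := FreeAlgebra.ι K (AGen.Xinv k)

/-- Defining relations of the affine Hecke algebra `Ĥ(A_n)`. -/
inductive HARel (q : K) (n : ℕ) : FreeAlgebra K (AGen n) → FreeAlgebra K (AGen n) → Prop
  | quad (c : Fin (n - 1)) : HARel q n (ag c * ag c) ((q - q⁻¹) • ag c + 1)
  | braid (c c' : Fin (n - 1)) (h : c'.1 = c.1 + 1) :
      HARel q n (ag c * ag c' * ag c) (ag c' * ag c * ag c')
  | gcomm (c c' : Fin (n - 1)) (h : c.1 + 1 < c'.1) :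
      HARel q n (ag c * ag c') (ag c' * ag c)
  | Xcomm (k l : Fin n) : HARel q n (aX k * aX l) (aX l * aX k)
  | Xunit (k : Fin n) : HARel q n (aX k * aXi k) 1
  | Xunit' (k : Fin n) : HARel q n (aXi k * aX k) 1
  | gXg (c : Fin (n - 1)) : HARel q n (ag c * aX (lo c) * ag c) (aX (hi c))
  | gX (c : Fin (n - 1)) (k : Fin n) (h : k ≠ lo c ∧ k ≠ hi c) :
      HARel q n (ag c * aX k) (aX k * ag c)

/-- The affine Hecke algebra `Ĥ(A_n)`. -/
abbrev HeckeA (q : K) (n : ℕ) : Type := RingQuot (HARel q n)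

/-- Defining relations of the cyclotomic quotient `H(A_n)_{λ,m}`. -/
inductive HAcRel (q : K) (n : ℕ) (m : K →₀ ℕ) :
    FreeAlgebra K (AGen n) → FreeAlgebra K (AGen n) → Prop
  | ofA {a b : FreeAlgebra K (AGen n)} (h : HARel q n a b) : HAcRel q n m a b
  | cyc (h0 : 0 < n) : HAcRel q n m (polyProd (aX ⟨0, h0⟩) m.support ⇑m) 0

/-- The cyclotomic quotient `H(A_n)_{λ,m}`. -/
abbrev HeckeAc (q : K) (n : ℕ) (m : K →₀ ℕ) : Type := RingQuot (HAcRel q n m)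

/-! ### The affine Hecke algebra of type B and its cyclotomic quotients -/

inductive BGen (n : ℕ) : Type
  | g0 : BGen n
  | g : Fin (n - 1) → BGen n
  | X : Fin n → BGen n
  | Xinv : Fin n → BGen n

def bg0 : FreeAlgebra K (BGen n) := FreeAlgebra.ι K BGen.g0
def bg (c : Fin (n - 1)) : FreeAlgebra K (BGen n) := FreeAlgebra.ι K (BGen.g c)
def bX (k : Fin n) : FreeAlgebra K (BGen n) := FreeAlgebra.ι K (BGen.X k)
def bXi (k : Fin n) : FreeAlgebra K (BGen n) := FreeAlgebra.ι K (BGen.Xinv k)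

/-- Defining relations of the affine Hecke algebra `Ĥ(B_n)`. -/
inductive HBRel (p q : K) (n : ℕ) : FreeAlgebra K (BGen n) → FreeAlgebra K (BGen n) → Prop
  | quad0 : HBRel p q n (bg0 * bg0) ((p - p⁻¹) • bg0 + 1)
  | quad (c : Fin (n - 1)) : HBRel p q n (bg c * bg c) ((q - q⁻¹) • bg c + 1)
  | braid0 (h : 0 < n - 1) :
      HBRel p q n (bg0 * bg ⟨0, h⟩ * bg0 * bg ⟨0, h⟩) (bg ⟨0, h⟩ * bg0 * bg ⟨0, h⟩ * bg0)
  | braid (c c' : Fin (n - 1)) (h : c'.1 = c.1 + 1) :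
      HBRel p q n (bg c * bg c' * bg c) (bg c' * bg c * bg c')
  | gcomm (c c' : Fin (n - 1)) (h : c.1 + 1 < c'.1) :
      HBRel p q n (bg c * bg c') (bg c' * bg c)
  | g0comm (c : Fin (n - 1)) (h : 1 ≤ c.1) : HBRel p q n (bg0 * bg c) (bg c * bg0)
  | Xcomm (k l : Fin n) : HBRel p q n (bX k * bX l) (bX l * bX k)
  | Xunit (k : Fin n) : HBRel p q n (bX k * bXi k) 1
  | Xunit' (k : Fin n) : HBRel p q n (bXi k * bX k) 1
  | g0Xg0 (h0 : 0 < n) : HBRel p q n (bg0 * bXi ⟨0, h0⟩ * bg0) (bX ⟨0, h0⟩)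
  | gXg (c : Fin (n - 1)) : HBRel p q n (bg c * bX (lo c) * bg c) (bX (hi c))
  | gX (c : Fin (n - 1)) (k : Fin n) (h : k ≠ lo c ∧ k ≠ hi c) :
      HBRel p q n (bg c * bX k) (bX k * bg c)
  | g0X (k : Fin n) (h : k.1 ≠ 0) : HBRel p q n (bg0 * bX k) (bX k * bg0)

/-- The affine Hecke algebra `Ĥ(B_n)`. -/
abbrev HeckeB (p q : K) (n : ℕ) : Type := RingQuot (HBRel p q n)

/-- Defining relations of the cyclotomic quotient `H(B_n)_{λ,m}`. -/
inductive HBcRel (p q : K) (n : ℕ) (m : K →₀ ℕ) :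
    FreeAlgebra K (BGen n) → FreeAlgebra K (BGen n) → Prop
  | ofB {a b : FreeAlgebra K (BGen n)} (h : HBRel p q n a b) : HBcRel p q n m a b
  | cyc (h0 : 0 < n) : HBcRel p q n m (polyProd (bX ⟨0, h0⟩) m.support ⇑m) 0

/-- The cyclotomic quotient `H(B_n)_{λ,m}`. -/
abbrev HeckeBc (p q : K) (n : ℕ) (m : K →₀ ℕ) : Type := RingQuot (HBcRel p q n m)

/-! ### Spectral idempotent families and corner (block) algebras -/

/-- The characterizing properties of the family of idempotents `e^H(i)` projecting onto
the common generalized eigenspaces of commuting elements `Xs k` (acting by left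
multiplication): they are orthogonal idempotents summing to `1`, commuting with the
`Xs k`, with `(Xs k - i_k)` nilpotent on `E i`.  Such a family is unique. -/
def IsSpectralFamily {A : Type} [Ring A] [Algebra K A] (Xs : Fin n → A)
    (T : Finset (Fin n → K)) (E : (Fin n → K) → A) : Prop :=
  (∀ i, i ∉ T → E i = 0) ∧ (∑ i ∈ T, E i = 1) ∧
  (∀ i, E i * E i = E i) ∧ (∀ i j, i ≠ j → E i * E j = 0) ∧
  (∀ i k, Xs k * E i = E i * Xs k) ∧
  (∀ i ∈ T, ∀ k : Fin n, ∃ N : ℕ, 0 < N ∧ (Xs k - algebraMap K A (i k)) ^ N * E i = 0)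

/-- Relation identifying a central idempotent `e` with `1`. -/
def cornerRel {A : Type} [Ring A] (e : A) : A → A → Prop := fun x y => x = e ∧ y = 1

/-- For a central idempotent `e` of `A`, the corner algebra `eA` realized as the
quotient of `A` by the relation `e = 1`. -/
abbrev Corner (A : Type) [Ring A] (e : A) : Type := RingQuot (cornerRel e)

/-- Canonical algebra map `A → eA`. -/
def cornerMk {A : Type} [Ring A] [Algebra K A] (e : A) : A →ₐ[K] Corner A e :=
  RingQuot.mkAlgHom K (cornerRel e)

/-! ### Cyclotomic KLR algebras (type A quiver Hecke algebras) -/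

/-- Generators of the KLR algebra: `psi c` is the paper's `ψ_{c+1}`, `y k` is `y_{k+1}`,
`e i` for `i` in the index set `α`. -/
inductive RGen (K : Type) (n : ℕ) (α : Finset (Fin n → K)) : Type
  | psi : Fin (n - 1) → RGen K n α
  | y : Fin n → RGen K n α
  | e : {x // x ∈ α} → RGen K n α

def rψ {α : Finset (Fin n → K)} (c : Fin (n - 1)) : FreeAlgebra K (RGen K n α) :=
  FreeAlgebra.ι K (RGen.psi c)
def ry {α : Finset (Fin n → K)} (k : Fin n) : FreeAlgebra K (RGen K n α) :=
  FreeAlgebra.ι K (RGen.y k)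
def re {α : Finset (Fin n → K)} (i : {x // x ∈ α}) : FreeAlgebra K (RGen K n α) :=
  FreeAlgebra.ι K (RGen.e i)

/-- Defining relations of the cyclotomic KLR algebra `R^α_{λ,m}`. -/
inductive RRel (q : K) (n : ℕ) (α : Finset (Fin n → K)) (m : K →₀ ℕ) :
    FreeAlgebra K (RGen K n α) → FreeAlgebra K (RGen K n α) → Prop
  | esum : RRel q n α m (∑ i ∈ α.attach, re i) 1
  | eidem (i) : RRel q n α m (re i * re i) (re i)
  | eorth (i j) (h : i ≠ j) : RRel q n α m (re i * re j) 0
  | ycomm (k l : Fin n) : RRel q n α m (ry k * ry l) (ry l * ry k)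
  | ye (k : Fin n) (i) : RRel q n α m (ry k * re i) (re i * ry k)
  | psiE (c : Fin (n - 1)) (i : {x // x ∈ α}) (h' : sw c i.1 ∈ α) :
      RRel q n α m (rψ c * re i) (re ⟨sw c i.1, h'⟩ * rψ c)
  | psiyB (c : Fin (n - 1)) (i) (h : i.1 (lo c) = i.1 (hi c)) :
      RRel q n α m ((rψ c * ry (lo c) - ry (hi c) * rψ c) * re i) (-re i)
  | psiyB1 (c : Fin (n - 1)) (i) (h : i.1 (lo c) = i.1 (hi c)) :
      RRel q n α m ((rψ c * ry (hi c) - ry (lo c) * rψ c) * re i) (re i)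
  | psiyO (c : Fin (n - 1)) (i) (j : Fin n)
      (h : i.1 (lo c) ≠ i.1 (hi c) ∨ (j ≠ lo c ∧ j ≠ hi c)) :
      RRel q n α m ((rψ c * ry j - ry (Equiv.swap (lo c) (hi c) j) * rψ c) * re i) 0
  | psicomm (c c' : Fin (n - 1)) (h : c.1 + 1 < c'.1) :
      RRel q n α m (rψ c * rψ c') (rψ c' * rψ c)
  | sqEq (c : Fin (n - 1)) (i) (h : i.1 (lo c) = i.1 (hi c)) :
      RRel q n α m (rψ c * rψ c * re i) 0
  | sqNon (c : Fin (n - 1)) (i) (h : qnon q (i.1 (lo c)) (i.1 (hi c))) :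
      RRel q n α m (rψ c * rψ c * re i) (re i)
  | sqArr (c : Fin (n - 1)) (i) (h : qarr q (i.1 (lo c)) (i.1 (hi c))) :
      RRel q n α m (rψ c * rψ c * re i) ((ry (hi c) - ry (lo c)) * re i)
  | sqBak (c : Fin (n - 1)) (i) (h : qbak q (i.1 (lo c)) (i.1 (hi c))) :
      RRel q n α m (rψ c * rψ c * re i) ((ry (lo c) - ry (hi c)) * re i)
  | sqDbl (c : Fin (n - 1)) (i) (h : qdbl q (i.1 (lo c)) (i.1 (hi c))) :
      RRel q n α m (rψ c * rψ c * re i) ((ry (hi c) - ry (lo c)) * ((ry (lo c) - ry (hi c)) * re i))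
  | brArr (c c' : Fin (n - 1)) (hcc : c'.1 = c.1 + 1) (i) (h1 : i.1 (lo c) = i.1 (hi c'))
      (h2 : qarr q (i.1 (lo c)) (i.1 (hi c))) :
      RRel q n α m ((rψ c * rψ c' * rψ c - rψ c' * rψ c * rψ c') * re i) (re i)
  | brBak (c c' : Fin (n - 1)) (hcc : c'.1 = c.1 + 1) (i) (h1 : i.1 (lo c) = i.1 (hi c'))
      (h2 : qbak q (i.1 (lo c)) (i.1 (hi c))) :
      RRel q n α m ((rψ c * rψ c' * rψ c - rψ c' * rψ c * rψ c') * re i) (-re i)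
  | brDbl (c c' : Fin (n - 1)) (hcc : c'.1 = c.1 + 1) (i) (h1 : i.1 (lo c) = i.1 (hi c'))
      (h2 : qdbl q (i.1 (lo c)) (i.1 (hi c))) :
      RRel q n α m ((rψ c * rψ c' * rψ c - rψ c' * rψ c * rψ c') * re i)
        ((ry (hi c') + ry (lo c) - ry (hi c) - ry (hi c)) * re i)
  | brEls (c c' : Fin (n - 1)) (hcc : c'.1 = c.1 + 1) (i)
      (h : ¬(i.1 (lo c) = i.1 (hi c') ∧ (qarr q (i.1 (lo c)) (i.1 (hi c)) ∨
            qbak q (i.1 (lo c)) (i.1 (hi c)) ∨ qdbl q (i.1 (lo c)) (i.1 (hi c))))) :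
      RRel q n α m ((rψ c * rψ c' * rψ c - rψ c' * rψ c * rψ c') * re i) 0
  | cyc (i) (h0 : 0 < n) :
      RRel q n α m (ry ⟨0, h0⟩ ^ m (i.1 ⟨0, h0⟩) * re i) 0

/-- The cyclotomic KLR algebra `R^α_{λ,m}`. -/
abbrev KLR (q : K) (n : ℕ) (α : Finset (Fin n → K)) (m : K →₀ ℕ) : Type :=
  RingQuot (RRel q n α m)

/-! ### The generalized Varagnolo–Vasserot algebras `V^β_λ` and cyclotomic quotients -/

inductive VGen (K : Type) (n : ℕ) (β : Finset (Fin n → K)) : Type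
  | psi0 : VGen K n β
  | psi : Fin (n - 1) → VGen K n β
  | y : Fin n → VGen K n β
  | e : {x // x ∈ β} → VGen K n β

def vψ0 {β : Finset (Fin n → K)} : FreeAlgebra K (VGen K n β) := FreeAlgebra.ι K VGen.psi0
def vψ {β : Finset (Fin n → K)} (c : Fin (n - 1)) : FreeAlgebra K (VGen K n β) :=
  FreeAlgebra.ι K (VGen.psi c)
def vy {β : Finset (Fin n → K)} (k : Fin n) : FreeAlgebra K (VGen K n β) :=
  FreeAlgebra.ι K (VGen.y k)
def ve {β : Finset (Fin n → K)} (i : {x // x ∈ β}) : FreeAlgebra K (VGen K n β) :=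
  FreeAlgebra.ι K (VGen.e i)

/-- Case conditions appearing in the four-term relation (Rel:V11). -/
def c4a (q i1 i2 : K) : Prop := i1⁻¹ ≠ i1 ∧ qarr q i1 i2 ∧ i2⁻¹ = i2
def c4b (q i1 i2 : K) : Prop := i1⁻¹ ≠ i1 ∧ qbak q i1 i2 ∧ i2⁻¹ = i2
def c4c (q i1 i2 : K) : Prop := i1⁻¹ = i1 ∧ qdbl q i1 i2 ∧ i2⁻¹ = i2
def c4d (p i1 i2 : K) : Prop := i2 ≠ i1 ∧ pbak p i1⁻¹ ∧ i1⁻¹ = i2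
def c4e (p i1 i2 : K) : Prop := i2 ≠ i1 ∧ parr p i1⁻¹ ∧ i1⁻¹ = i2
def c4f (p i1 i2 : K) : Prop := i2 ≠ i1 ∧ pdbl p i1⁻¹ ∧ i1⁻¹ = i2

/-- `((ψ_0ψ_1)² - (ψ_1ψ_0)²) e(i)`. -/
def vfour {β : Finset (Fin n → K)} (h2 : 1 < n) (i : {x // x ∈ β}) :
    FreeAlgebra K (VGen K n β) :=
  (vψ0 * vψ ⟨0, by omega⟩ * vψ0 * vψ ⟨0, by omega⟩ -
    vψ ⟨0, by omega⟩ * vψ0 * vψ ⟨0, by omega⟩ * vψ0) * ve i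

/-- Defining relations of the cyclotomic quotient `V^β_{λ,m}` of the generalized
Varagnolo–Vasserot algebra (Definition 2.1 of the paper, plus the cyclotomic relation). -/
inductive VRel (p q : K) (n : ℕ) (β : Finset (Fin n → K)) (m : K →₀ ℕ) :
    FreeAlgebra K (VGen K n β) → FreeAlgebra K (VGen K n β) → Prop
  | esum : VRel p q n β m (∑ i ∈ β.attach, ve i) 1
  | eidem (i) : VRel p q n β m (ve i * ve i) (ve i)
  | eorth (i j) (h : i ≠ j) : VRel p q n β m (ve i * ve j) 0
  | ycomm (k l : Fin n) : VRel p q n β m (vy k * vy l) (vy l * vy k)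
  | ye (k : Fin n) (i) : VRel p q n β m (vy k * ve i) (ve i * vy k)
  | psiE (c : Fin (n - 1)) (i : {x // x ∈ β}) (h' : sw c i.1 ∈ β) :
      VRel p q n β m (vψ c * ve i) (ve ⟨sw c i.1, h'⟩ * vψ c)
  | psi0E (i : {x // x ∈ β}) (h0 : 0 < n) (h' : invMove h0 i.1 ∈ β) :
      VRel p q n β m (vψ0 * ve i) (ve ⟨invMove h0 i.1, h'⟩ * vψ0)
  | psiyB (c : Fin (n - 1)) (i) (h : i.1 (lo c) = i.1 (hi c)) :
      VRel p q n β m ((vψ c * vy (lo c) - vy (hi c) * vψ c) * ve i) (-ve i)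
  | psiyB1 (c : Fin (n - 1)) (i) (h : i.1 (lo c) = i.1 (hi c)) :
      VRel p q n β m ((vψ c * vy (hi c) - vy (lo c) * vψ c) * ve i) (ve i)
  | psiyO (c : Fin (n - 1)) (i) (j : Fin n)
      (h : i.1 (lo c) ≠ i.1 (hi c) ∨ (j ≠ lo c ∧ j ≠ hi c)) :
      VRel p q n β m ((vψ c * vy j - vy (Equiv.swap (lo c) (hi c) j) * vψ c) * ve i) 0
  | psicomm (c c' : Fin (n - 1)) (h : c.1 + 1 < c'.1) :
      VRel p q n β m (vψ c * vψ c') (vψ c' * vψ c)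
  | psicomm0 (c : Fin (n - 1)) (h : 1 ≤ c.1) : VRel p q n β m (vψ0 * vψ c) (vψ c * vψ0)
  | sqEq (c : Fin (n - 1)) (i) (h : i.1 (lo c) = i.1 (hi c)) :
      VRel p q n β m (vψ c * vψ c * ve i) 0
  | sqNon (c : Fin (n - 1)) (i) (h : qnon q (i.1 (lo c)) (i.1 (hi c))) :
      VRel p q n β m (vψ c * vψ c * ve i) (ve i)
  | sqArr (c : Fin (n - 1)) (i) (h : qarr q (i.1 (lo c)) (i.1 (hi c))) :
      VRel p q n β m (vψ c * vψ c * ve i) ((vy (hi c) - vy (lo c)) * ve i)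
  | sqBak (c : Fin (n - 1)) (i) (h : qbak q (i.1 (lo c)) (i.1 (hi c))) :
      VRel p q n β m (vψ c * vψ c * ve i) ((vy (lo c) - vy (hi c)) * ve i)
  | sqDbl (c : Fin (n - 1)) (i) (h : qdbl q (i.1 (lo c)) (i.1 (hi c))) :
      VRel p q n β m (vψ c * vψ c * ve i) ((vy (hi c) - vy (lo c)) * ((vy (lo c) - vy (hi c)) * ve i))
  | brArr (c c' : Fin (n - 1)) (hcc : c'.1 = c.1 + 1) (i) (h1 : i.1 (lo c) = i.1 (hi c'))
      (h2 : qarr q (i.1 (lo c)) (i.1 (hi c))) :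
      VRel p q n β m ((vψ c * vψ c' * vψ c - vψ c' * vψ c * vψ c') * ve i) (ve i)
  | brBak (c c' : Fin (n - 1)) (hcc : c'.1 = c.1 + 1) (i) (h1 : i.1 (lo c) = i.1 (hi c'))
      (h2 : qbak q (i.1 (lo c)) (i.1 (hi c))) :
      VRel p q n β m ((vψ c * vψ c' * vψ c - vψ c' * vψ c * vψ c') * ve i) (-ve i)
  | brDbl (c c' : Fin (n - 1)) (hcc : c'.1 = c.1 + 1) (i) (h1 : i.1 (lo c) = i.1 (hi c'))
      (h2 : qdbl q (i.1 (lo c)) (i.1 (hi c))) :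
      VRel p q n β m ((vψ c * vψ c' * vψ c - vψ c' * vψ c * vψ c') * ve i)
        ((vy (hi c') + vy (lo c) - vy (hi c) - vy (hi c)) * ve i)
  | brEls (c c' : Fin (n - 1)) (hcc : c'.1 = c.1 + 1) (i)
      (h : ¬(i.1 (lo c) = i.1 (hi c') ∧ (qarr q (i.1 (lo c)) (i.1 (hi c)) ∨
            qbak q (i.1 (lo c)) (i.1 (hi c)) ∨ qdbl q (i.1 (lo c)) (i.1 (hi c))))) :
      VRel p q n β m ((vψ c * vψ c' * vψ c - vψ c' * vψ c * vψ c') * ve i) 0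
  | psi0yNe (i) (h0 : 0 < n) (h : (i.1 ⟨0, h0⟩)⁻¹ ≠ i.1 ⟨0, h0⟩) :
      VRel p q n β m ((vψ0 * vy ⟨0, h0⟩ + vy ⟨0, h0⟩ * vψ0) * ve i) 0
  | psi0yEq (i) (h0 : 0 < n) (h : (i.1 ⟨0, h0⟩)⁻¹ = i.1 ⟨0, h0⟩) :
      VRel p q n β m ((vψ0 * vy ⟨0, h0⟩ + vy ⟨0, h0⟩ * vψ0) * ve i) (ve i + ve i)
  | psi0yO (k : Fin n) (h : k.1 ≠ 0) : VRel p q n β m (vψ0 * vy k) (vy k * vψ0)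
  | sq0Eq (i) (h0 : 0 < n) (h : (i.1 ⟨0, h0⟩)⁻¹ = i.1 ⟨0, h0⟩) :
      VRel p q n β m (vψ0 * vψ0 * ve i) 0
  | sq0Non (i) (h0 : 0 < n) (h : pnon p (i.1 ⟨0, h0⟩)) :
      VRel p q n β m (vψ0 * vψ0 * ve i) (ve i)
  | sq0Arr (i) (h0 : 0 < n) (h : parr p (i.1 ⟨0, h0⟩)) :
      VRel p q n β m (vψ0 * vψ0 * ve i) (vy ⟨0, h0⟩ * ve i)
  | sq0Bak (i) (h0 : 0 < n) (h : pbak p (i.1 ⟨0, h0⟩)) :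
      VRel p q n β m (vψ0 * vψ0 * ve i) (-(vy ⟨0, h0⟩ * ve i))
  | sq0Dbl (i) (h0 : 0 < n) (h : pdbl p (i.1 ⟨0, h0⟩)) :
      VRel p q n β m (vψ0 * vψ0 * ve i) (-(vy ⟨0, h0⟩ * (vy ⟨0, h0⟩ * ve i)))
  | fourA (i) (h2 : 1 < n) (h : c4a q (i.1 ⟨0, Nat.lt_of_succ_lt h2⟩) (i.1 ⟨1, h2⟩)) :
      VRel p q n β m (vfour h2 i) ((2 : K) • (vψ0 * ve i))
  | fourB (i) (h2 : 1 < n) (h : c4b q (i.1 ⟨0, Nat.lt_of_succ_lt h2⟩) (i.1 ⟨1, h2⟩)) :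
      VRel p q n β m (vfour h2 i) (-((2 : K) • (vψ0 * ve i)))
  | fourC (i) (h2 : 1 < n) (h : c4c q (i.1 ⟨0, Nat.lt_of_succ_lt h2⟩) (i.1 ⟨1, h2⟩)) :
      VRel p q n β m (vfour h2 i) ((4 : K) • ((vψ0 * vy ⟨0, Nat.lt_of_succ_lt h2⟩ - 1) * ve i))
  | fourD (i) (h2 : 1 < n) (h : c4d p (i.1 ⟨0, Nat.lt_of_succ_lt h2⟩) (i.1 ⟨1, h2⟩)) :
      VRel p q n β m (vfour h2 i) (-(vψ ⟨0, by omega⟩ * ve i))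
  | fourE (i) (h2 : 1 < n) (h : c4e p (i.1 ⟨0, Nat.lt_of_succ_lt h2⟩) (i.1 ⟨1, h2⟩)) :
      VRel p q n β m (vfour h2 i) (vψ ⟨0, by omega⟩ * ve i)
  | fourF (i) (h2 : 1 < n) (h : c4f p (i.1 ⟨0, Nat.lt_of_succ_lt h2⟩) (i.1 ⟨1, h2⟩)) :
      VRel p q n β m (vfour h2 i)
        (vψ ⟨0, by omega⟩ * ((vy ⟨0, Nat.lt_of_succ_lt h2⟩ - vy ⟨1, h2⟩) * ve i))
  | fourG (i) (h2 : 1 < n)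
      (h : ¬c4a q (i.1 ⟨0, Nat.lt_of_succ_lt h2⟩) (i.1 ⟨1, h2⟩) ∧
           ¬c4b q (i.1 ⟨0, Nat.lt_of_succ_lt h2⟩) (i.1 ⟨1, h2⟩) ∧
           ¬c4c q (i.1 ⟨0, Nat.lt_of_succ_lt h2⟩) (i.1 ⟨1, h2⟩) ∧
           ¬c4d p (i.1 ⟨0, Nat.lt_of_succ_lt h2⟩) (i.1 ⟨1, h2⟩) ∧
           ¬c4e p (i.1 ⟨0, Nat.lt_of_succ_lt h2⟩) (i.1 ⟨1, h2⟩) ∧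
           ¬c4f p (i.1 ⟨0, Nat.lt_of_succ_lt h2⟩) (i.1 ⟨1, h2⟩)) :
      VRel p q n β m (vfour h2 i) 0
  | cyc (i) (h0 : 0 < n) :
      VRel p q n β m (vy ⟨0, h0⟩ ^ m (i.1 ⟨0, h0⟩) * ve i) 0

/-- The cyclotomic quotient `V^β_{λ,m}` of the generalized Varagnolo–Vasserot algebra. -/
abbrev VB (p q : K) (n : ℕ) (β : Finset (Fin n → K)) (m : K →₀ ℕ) : Type :=
  RingQuot (VRel p q n β m)

/-! ### Laurent monomials and the intermediary algebras `𝕀_{N,A}` and `𝕀_N` -/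

/-- Given elements `X k` with formal inverses `Xi k`, the monomial `X^x` for `x ∈ ℤ^n`. -/
def XmonOf {F : Type} [Monoid F] (X Xi : Fin n → F) (x : Fin n → ℤ) : F :=
  ((List.finRange n).map fun k => if 0 ≤ x k then X k ^ (x k).toNat
    else Xi k ^ (-x k).toNat).prod

/-- The Laurent polynomial `(X^x - X^{x - tα})/(1 - X^{-α})` (a geometric sum). -/
def divMonOf {F : Type} [Ring F] (X Xi : Fin n → F) (x αv : Fin n → ℤ) (t : ℤ) : F :=
  if 0 ≤ t then ∑ j ∈ Finset.range t.toNat, XmonOf X Xi (x - (j : ℤ) • αv)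
  else -∑ j ∈ Finset.range (-t).toNat, XmonOf X Xi (x + ((j : ℤ) + 1) • αv)

/-- The root `α_b = ε_{b+1} - ε_b` as an exponent vector. -/
def alC (c : Fin (n - 1)) : Fin n → ℤ := fun k => if k = hi c then 1 else if k = lo c then -1 else 0

/-- The root `α_0 = 2ε_1` as an exponent vector. -/
def alB : Fin n → ℤ := fun k => if k.1 = 0 then 2 else 0

/-- Action of `r_0` on exponent vectors. -/
def rx0 (x : Fin n → ℤ) : Fin n → ℤ := fun k => if k.1 = 0 then -x k else x k

/-- Action of the simple transposition `r_{c+1}` on exponent vectors. -/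
def rxC (c : Fin (n - 1)) (x : Fin n → ℤ) : Fin n → ℤ := x ∘ Equiv.swap (lo c) (hi c)

/-- `-α_1` as an exponent vector (so `X^{-α_1} = X_1X_2⁻¹`). -/
def mA1 : Fin n → ℤ := fun k => if k.1 = 0 then 1 else if k.1 = 1 then -1 else 0
/-- `-r_0(α_1)` as an exponent vector (so `X^{-r_0(α_1)} = X_1⁻¹X_2⁻¹`). -/
def mR0A1 : Fin n → ℤ := fun k => if k.1 = 0 then -1 else if k.1 = 1 then -1 else 0
/-- `-r_1(α_0)` as an exponent vector (so `X^{-r_1(α_0)} = X_2⁻²`). -/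
def mR1A0 : Fin n → ℤ := fun k => if k.1 = 1 then -2 else 0
/-- `-α_0` as an exponent vector (so `X^{-α_0} = X_1⁻²`). -/
def mA0 : Fin n → ℤ := fun k => if k.1 = 0 then -2 else 0

/-- Generators of the intermediary algebra `𝕀_{N,A}` of Section 5 (restricted to type A). -/
inductive IAGen (K : Type) (n : ℕ) (α : Finset (Fin n → K)) : Type
  | phi : Fin (n - 1) → IAGen K n α
  | X : Fin n → IAGen K n α
  | Xinv : Fin n → IAGen K n α
  | e : {x // x ∈ α} → IAGen K n α

def tφ {α : Finset (Fin n → K)} (c : Fin (n - 1)) : FreeAlgebra K (IAGen K n α) :=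
  FreeAlgebra.ι K (IAGen.phi c)
def tX {α : Finset (Fin n → K)} (k : Fin n) : FreeAlgebra K (IAGen K n α) :=
  FreeAlgebra.ι K (IAGen.X k)
def tXi {α : Finset (Fin n → K)} (k : Fin n) : FreeAlgebra K (IAGen K n α) :=
  FreeAlgebra.ι K (IAGen.Xinv k)
def te {α : Finset (Fin n → K)} (i : {x // x ∈ α}) : FreeAlgebra K (IAGen K n α) :=
  FreeAlgebra.ι K (IAGen.e i)

/-- The "commutative part" of the relations of `𝕀_{N,A}`: relations among the `X`'s and
the idempotents `e(i)`, including the cyclotomic relation `(X_1 - i_1)^{m(i_1)}e(i) = 0`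
and the nilpotency relations `(X_k - i_k)^N e(i) = 0` for `k ≥ 2`. -/
inductive XARel (n : ℕ) (α : Finset (Fin n → K)) (m : K →₀ ℕ) (N : ℕ) :
    FreeAlgebra K (IAGen K n α) → FreeAlgebra K (IAGen K n α) → Prop
  | Xcomm (k l : Fin n) : XARel n α m N (tX k * tX l) (tX l * tX k)
  | Xunit (k : Fin n) : XARel n α m N (tX k * tXi k) 1
  | Xunit' (k : Fin n) : XARel n α m N (tXi k * tX k) 1
  | esum : XARel n α m N (∑ i ∈ α.attach, te i) 1
  | eidem (i) : XARel n α m N (te i * te i) (te i)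
  | eorth (i j) (h : i ≠ j) : XARel n α m N (te i * te j) 0
  | Xe (k : Fin n) (i) : XARel n α m N (tX k * te i) (te i * tX k)
  | cyc (i) (h0 : 0 < n) :
      XARel n α m N ((tX ⟨0, h0⟩ - algebraMap K (FreeAlgebra K (IAGen K n α)) (i.1 ⟨0, h0⟩)) ^
        m (i.1 ⟨0, h0⟩) * te i) 0
  | nil (i) (k : Fin n) (h : k.1 ≠ 0) :
      XARel n α m N ((tX k - algebraMap K (FreeAlgebra K (IAGen K n α)) (i.1 k)) ^ N * te i) 0

/-- Defining relations of the intermediary algebra `𝕀_{N,A}`.  Partial inverses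
`(⋯)⁻¹e(i)` appearing in the relations of Definition 5.1 are handled by quantifying over
all elements `Z` which invert the relevant denominator `e(i)`-locally, modulo the
commutative relations `XARel` (such a `Z` exists and its class is unique, by the
nilpotency relations). -/
inductive IARel (q : K) (n : ℕ) (α : Finset (Fin n → K)) (m : K →₀ ℕ) (N : ℕ) :
    FreeAlgebra K (IAGen K n α) → FreeAlgebra K (IAGen K n α) → Prop
  | ofX {a b : FreeAlgebra K (IAGen K n α)} (h : XARel n α m N a b) : IARel q n α m N a b
  | phiE (c : Fin (n - 1)) (i : {x // x ∈ α}) (h' : sw c i.1 ∈ α) :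
      IARel q n α m N (tφ c * te i) (te ⟨sw c i.1, h'⟩ * tφ c)
  | phiXne (c : Fin (n - 1)) (i) (x : Fin n → ℤ) (h : i.1 (lo c) ≠ i.1 (hi c)) :
      IARel q n α m N ((tφ c * XmonOf tX tXi x - XmonOf tX tXi (rxC c x) * tφ c) * te i) 0
  | phiXeq (c : Fin (n - 1)) (i) (x : Fin n → ℤ) (h : i.1 (lo c) = i.1 (hi c)) :
      IARel q n α m N ((tφ c * XmonOf tX tXi x - XmonOf tX tXi (rxC c x) * tφ c) * te i)
        ((q • (1 : FreeAlgebra K (IAGen K n α)) - q⁻¹ • XmonOf tX tXi (-alC c)) *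
          (divMonOf tX tXi x (alC c) (x (hi c) - x (lo c)) * te i))
  | phicomm (c c' : Fin (n - 1)) (h : c.1 + 1 < c'.1) :
      IARel q n α m N (tφ c * tφ c') (tφ c' * tφ c)
  | phisqEq (c : Fin (n - 1)) (i) (h : i.1 (lo c) = i.1 (hi c)) :
      IARel q n α m N (tφ c * tφ c * te i) ((q + q⁻¹) • (tφ c * te i))
  | phisqNe (c : Fin (n - 1)) (i) (h : i.1 (lo c) ≠ i.1 (hi c))
      (Z : FreeAlgebra K (IAGen K n α))
      (hZ : RingQuot.mkAlgHom K (XARel n α m N)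
          ((1 - XmonOf tX tXi (alC c)) * ((1 - XmonOf tX tXi (-alC c)) * (Z * te i))) =
        RingQuot.mkAlgHom K (XARel n α m N) (te i)) :
      IARel q n α m N (tφ c * tφ c * te i) (te i + ((q - q⁻¹) ^ 2) • (Z * te i))
  | phibrEq (c c' : Fin (n - 1)) (hcc : c'.1 = c.1 + 1) (i)
      (h1 : i.1 (lo c) = i.1 (hi c)) (h2 : i.1 (hi c) = i.1 (hi c')) :
      IARel q n α m N ((tφ c * tφ c' * tφ c - tφ c' * tφ c * tφ c') * te i)
        ((tφ c - tφ c') * te i)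
  | phibrNe (c c' : Fin (n - 1)) (hcc : c'.1 = c.1 + 1) (i)
      (h1 : i.1 (lo c) = i.1 (hi c')) (h2 : i.1 (lo c) ≠ i.1 (hi c))
      (Z : FreeAlgebra K (IAGen K n α))
      (hZ : RingQuot.mkAlgHom K (XARel n α m N)
          ((1 - XmonOf tX tXi (-alC c)) ^ 2 * ((1 - XmonOf tX tXi (-alC c')) ^ 2 * (Z * te i))) =
        RingQuot.mkAlgHom K (XARel n α m N) (te i)) :
      IARel q n α m N ((tφ c * tφ c' * tφ c - tφ c' * tφ c * tφ c') * te i)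
        (((q - q⁻¹) ^ 2) • ((XmonOf tX tXi (-alC c') - XmonOf tX tXi (-alC c)) *
          ((q • (1 : FreeAlgebra K (IAGen K n α)) - q⁻¹ • XmonOf tX tXi (-alC c - alC c')) *
            (Z * te i))))
  | phibrEls (c c' : Fin (n - 1)) (hcc : c'.1 = c.1 + 1) (i) (h : i.1 (lo c) ≠ i.1 (hi c')) :
      IARel q n α m N ((tφ c * tφ c' * tφ c - tφ c' * tφ c * tφ c') * te i) 0

/-- The intermediary algebra `𝕀_{N,A}`. -/
abbrev IA (q : K) (n : ℕ) (α : Finset (Fin n → K)) (m : K →₀ ℕ) (N : ℕ) : Type :=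
  RingQuot (IARel q n α m N)

/-- Generators of the intermediary algebra `𝕀_N` of Definition 5.1. -/
inductive IBGen (K : Type) (n : ℕ) (β : Finset (Fin n → K)) : Type
  | phi0 : IBGen K n β
  | phi : Fin (n - 1) → IBGen K n β
  | X : Fin n → IBGen K n β
  | Xinv : Fin n → IBGen K n β
  | e : {x // x ∈ β} → IBGen K n β

def uφ0 {β : Finset (Fin n → K)} : FreeAlgebra K (IBGen K n β) := FreeAlgebra.ι K IBGen.phi0
def uφ {β : Finset (Fin n → K)} (c : Fin (n - 1)) : FreeAlgebra K (IBGen K n β) :=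
  FreeAlgebra.ι K (IBGen.phi c)
def uX {β : Finset (Fin n → K)} (k : Fin n) : FreeAlgebra K (IBGen K n β) :=
  FreeAlgebra.ι K (IBGen.X k)
def uXi {β : Finset (Fin n → K)} (k : Fin n) : FreeAlgebra K (IBGen K n β) :=
  FreeAlgebra.ι K (IBGen.Xinv k)
def ue {β : Finset (Fin n → K)} (i : {x // x ∈ β}) : FreeAlgebra K (IBGen K n β) :=
  FreeAlgebra.ι K (IBGen.e i)

/-- The "commutative part" of the relations of `𝕀_N`. -/
inductive XBRel (n : ℕ) (β : Finset (Fin n → K)) (m : K →₀ ℕ) (N : ℕ) :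
    FreeAlgebra K (IBGen K n β) → FreeAlgebra K (IBGen K n β) → Prop
  | Xcomm (k l : Fin n) : XBRel n β m N (uX k * uX l) (uX l * uX k)
  | Xunit (k : Fin n) : XBRel n β m N (uX k * uXi k) 1
  | Xunit' (k : Fin n) : XBRel n β m N (uXi k * uX k) 1
  | esum : XBRel n β m N (∑ i ∈ β.attach, ue i) 1
  | eidem (i) : XBRel n β m N (ue i * ue i) (ue i)
  | eorth (i j) (h : i ≠ j) : XBRel n β m N (ue i * ue j) 0
  | Xe (k : Fin n) (i) : XBRel n β m N (uX k * ue i) (ue i * uX k)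
  | cyc (i) (h0 : 0 < n) :
      XBRel n β m N ((uX ⟨0, h0⟩ - algebraMap K (FreeAlgebra K (IBGen K n β)) (i.1 ⟨0, h0⟩)) ^
        m (i.1 ⟨0, h0⟩) * ue i) 0
  | nil (i) (k : Fin n) (h : k.1 ≠ 0) :
      XBRel n β m N ((uX k - algebraMap K (FreeAlgebra K (IBGen K n β)) (i.1 k)) ^ N * ue i) 0

/-- Case conditions for the modified four-term braid relation of Definition 5.1. -/
def ib4c1 (i1 i2 : K) : Prop := i1 = i2 ∧ i1 ^ 2 = 1 ∧ i2 ^ 2 = 1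
def ib4c2 (i1 i2 : K) : Prop := i1 ≠ i2 ∧ i1 ^ 2 = 1 ∧ i2 ^ 2 = 1
def ib4c3 (i1 i2 : K) : Prop := i1 ≠ i2 ∧ i1 ^ 2 ≠ 1 ∧ i2 ^ 2 = 1
def ib4c4 (i1 i2 : K) : Prop := i1 ≠ i2 ∧ i1 ^ 2 ≠ 1 ∧ i1⁻¹ = i2

/-- `(Φ_0Φ_1Φ_0Φ_1 - Φ_1Φ_0Φ_1Φ_0) e(i)`. -/
def ufour {β : Finset (Fin n → K)} (h2 : 1 < n) (i : {x // x ∈ β}) :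
    FreeAlgebra K (IBGen K n β) :=
  (uφ0 * uφ ⟨0, by omega⟩ * uφ0 * uφ ⟨0, by omega⟩ -
    uφ ⟨0, by omega⟩ * uφ0 * uφ ⟨0, by omega⟩ * uφ0) * ue i

/-- Defining relations of the intermediary algebra `𝕀_N` (Definition 5.1).  Partial
inverses `(⋯)⁻¹e(i)` are handled by quantifying over all local inverses `Z` modulo the
commutative relations `XBRel`; for the elements `Z_b`, `Y_0`, `Y_1` we use the
cancelled expressions (Z-Y) of Remark 5.3. -/
inductive IBRel (p q : K) (n : ℕ) (β : Finset (Fin n → K)) (m : K →₀ ℕ) (N : ℕ) :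
    FreeAlgebra K (IBGen K n β) → FreeAlgebra K (IBGen K n β) → Prop
  | ofX {a b : FreeAlgebra K (IBGen K n β)} (h : XBRel n β m N a b) : IBRel p q n β m N a b
  | phiE (c : Fin (n - 1)) (i : {x // x ∈ β}) (h' : sw c i.1 ∈ β) :
      IBRel p q n β m N (uφ c * ue i) (ue ⟨sw c i.1, h'⟩ * uφ c)
  | phi0E (i : {x // x ∈ β}) (h0 : 0 < n) (h' : invMove h0 i.1 ∈ β) :
      IBRel p q n β m N (uφ0 * ue i) (ue ⟨invMove h0 i.1, h'⟩ * uφ0)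
  | phiXne (c : Fin (n - 1)) (i) (x : Fin n → ℤ) (h : i.1 (lo c) ≠ i.1 (hi c)) :
      IBRel p q n β m N ((uφ c * XmonOf uX uXi x - XmonOf uX uXi (rxC c x) * uφ c) * ue i) 0
  | phiXeq (c : Fin (n - 1)) (i) (x : Fin n → ℤ) (h : i.1 (lo c) = i.1 (hi c)) :
      IBRel p q n β m N ((uφ c * XmonOf uX uXi x - XmonOf uX uXi (rxC c x) * uφ c) * ue i)
        ((q • (1 : FreeAlgebra K (IBGen K n β)) - q⁻¹ • XmonOf uX uXi (-alC c)) *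
          (divMonOf uX uXi x (alC c) (x (hi c) - x (lo c)) * ue i))
  | phi0Xne (i) (x : Fin n → ℤ) (h0 : 0 < n) (h : (i.1 ⟨0, h0⟩)⁻¹ ≠ i.1 ⟨0, h0⟩) :
      IBRel p q n β m N ((uφ0 * XmonOf uX uXi x - XmonOf uX uXi (rx0 x) * uφ0) * ue i) 0
  | phi0Xeq (i) (x : Fin n → ℤ) (h0 : 0 < n) (h : (i.1 ⟨0, h0⟩)⁻¹ = i.1 ⟨0, h0⟩) :
      IBRel p q n β m N ((uφ0 * XmonOf uX uXi x - XmonOf uX uXi (rx0 x) * uφ0) * ue i)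
        ((p • (1 : FreeAlgebra K (IBGen K n β)) - p⁻¹ • XmonOf uX uXi mA0) *
          (divMonOf uX uXi x alB (x ⟨0, h0⟩) * ue i))
  | phicomm (c c' : Fin (n - 1)) (h : c.1 + 1 < c'.1) :
      IBRel p q n β m N (uφ c * uφ c') (uφ c' * uφ c)
  | phi0comm (c : Fin (n - 1)) (h : 1 ≤ c.1) : IBRel p q n β m N (uφ0 * uφ c) (uφ c * uφ0)
  | phisqEq (c : Fin (n - 1)) (i) (h : i.1 (lo c) = i.1 (hi c)) :
      IBRel p q n β m N (uφ c * uφ c * ue i) ((q + q⁻¹) • (uφ c * ue i))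
  | phisqNe (c : Fin (n - 1)) (i) (h : i.1 (lo c) ≠ i.1 (hi c))
      (Z : FreeAlgebra K (IBGen K n β))
      (hZ : RingQuot.mkAlgHom K (XBRel n β m N)
          ((1 - XmonOf uX uXi (alC c)) * ((1 - XmonOf uX uXi (-alC c)) * (Z * ue i))) =
        RingQuot.mkAlgHom K (XBRel n β m N) (ue i)) :
      IBRel p q n β m N (uφ c * uφ c * ue i)
        ((q • (1 : FreeAlgebra K (IBGen K n β)) - q⁻¹ • XmonOf uX uXi (alC c)) *
          ((q • (1 : FreeAlgebra K (IBGen K n β)) - q⁻¹ • XmonOf uX uXi (-alC c)) *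
            (Z * ue i)))
  | phi0sqEq (i) (h0 : 0 < n) (h : (i.1 ⟨0, h0⟩)⁻¹ = i.1 ⟨0, h0⟩) :
      IBRel p q n β m N (uφ0 * uφ0 * ue i) ((p + p⁻¹) • (uφ0 * ue i))
  | phi0sqNe (i) (h0 : 0 < n) (h : (i.1 ⟨0, h0⟩)⁻¹ ≠ i.1 ⟨0, h0⟩)
      (Z : FreeAlgebra K (IBGen K n β))
      (hZ : RingQuot.mkAlgHom K (XBRel n β m N)
          ((1 - XmonOf uX uXi alB) * ((1 - XmonOf uX uXi mA0) * (Z * ue i))) =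
        RingQuot.mkAlgHom K (XBRel n β m N) (ue i)) :
      IBRel p q n β m N (uφ0 * uφ0 * ue i)
        ((p • (1 : FreeAlgebra K (IBGen K n β)) - p⁻¹ • XmonOf uX uXi alB) *
          ((p • (1 : FreeAlgebra K (IBGen K n β)) - p⁻¹ • XmonOf uX uXi mA0) *
            (Z * ue i)))
  | phibrEq (c c' : Fin (n - 1)) (hcc : c'.1 = c.1 + 1) (i)
      (h1 : i.1 (lo c) = i.1 (hi c)) (h2 : i.1 (hi c) = i.1 (hi c')) :
      IBRel p q n β m N ((uφ c * uφ c' * uφ c - uφ c' * uφ c * uφ c') * ue i)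
        ((uφ c - uφ c') * ue i)
  | phibrNe (c c' : Fin (n - 1)) (hcc : c'.1 = c.1 + 1) (i)
      (h1 : i.1 (lo c) = i.1 (hi c')) (h2 : i.1 (lo c) ≠ i.1 (hi c))
      (Z : FreeAlgebra K (IBGen K n β))
      (hZ : RingQuot.mkAlgHom K (XBRel n β m N)
          ((1 - XmonOf uX uXi (-alC c)) ^ 2 * ((1 - XmonOf uX uXi (-alC c')) ^ 2 * (Z * ue i))) =
        RingQuot.mkAlgHom K (XBRel n β m N) (ue i)) :
      IBRel p q n β m N ((uφ c * uφ c' * uφ c - uφ c' * uφ c * uφ c') * ue i)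
        (((q - q⁻¹) ^ 2) • ((XmonOf uX uXi (-alC c') - XmonOf uX uXi (-alC c)) *
          ((q • (1 : FreeAlgebra K (IBGen K n β)) - q⁻¹ • XmonOf uX uXi (-alC c - alC c')) *
            (Z * ue i))))
  | phibrEls (c c' : Fin (n - 1)) (hcc : c'.1 = c.1 + 1) (i) (h : i.1 (lo c) ≠ i.1 (hi c')) :
      IBRel p q n β m N ((uφ c * uφ c' * uφ c - uφ c' * uφ c * uφ c') * ue i) 0
  | four1 (i) (h2 : 1 < n) (h : ib4c1 (i.1 ⟨0, Nat.lt_of_succ_lt h2⟩) (i.1 ⟨1, h2⟩)) :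
      IBRel p q n β m N (ufour h2 i)
        ((p * q⁻¹ + p⁻¹ * q) • ((uφ0 * uφ ⟨0, by omega⟩ - uφ ⟨0, by omega⟩ * uφ0) * ue i))
  | four2 (i) (h2 : 1 < n) (h : ib4c2 (i.1 ⟨0, Nat.lt_of_succ_lt h2⟩) (i.1 ⟨1, h2⟩))
      (Z : FreeAlgebra K (IBGen K n β))
      (hZ : RingQuot.mkAlgHom K (XBRel n β m N)
          ((1 - XmonOf uX uXi mA1) ^ 2 * ((1 - XmonOf uX uXi mR0A1) ^ 2 * (Z * ue i))) =
        RingQuot.mkAlgHom K (XBRel n β m N) (ue i)) :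
      IBRel p q n β m N (ufour h2 i)
        (-(((q - q⁻¹) ^ 2) •
          ((uφ0 * (1 - XmonOf uX uXi mA0) -
              (p • (1 : FreeAlgebra K (IBGen K n β)) - p⁻¹ • XmonOf uX uXi mA0)) *
            (XmonOf uX uXi mA1 *
              ((p • (1 : FreeAlgebra K (IBGen K n β)) - p⁻¹ • XmonOf uX uXi mR1A0) *
                (Z * ue i))))))
  | four3 (i) (h2 : 1 < n) (h : ib4c3 (i.1 ⟨0, Nat.lt_of_succ_lt h2⟩) (i.1 ⟨1, h2⟩))
      (Z : FreeAlgebra K (IBGen K n β))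
      (hZ : RingQuot.mkAlgHom K (XBRel n β m N)
          ((1 - XmonOf uX uXi mA1) ^ 2 * ((1 - XmonOf uX uXi mR0A1) ^ 2 * (Z * ue i))) =
        RingQuot.mkAlgHom K (XBRel n β m N) (ue i)) :
      IBRel p q n β m N (ufour h2 i)
        (-(((q - q⁻¹) ^ 2) •
          (uφ0 * ((1 - XmonOf uX uXi mA0) *
            (XmonOf uX uXi mA1 *
              ((p • (1 : FreeAlgebra K (IBGen K n β)) - p⁻¹ • XmonOf uX uXi mR1A0) *
                (Z * ue i)))))))
  | four4 (i) (h2 : 1 < n) (h : ib4c4 (i.1 ⟨0, Nat.lt_of_succ_lt h2⟩) (i.1 ⟨1, h2⟩))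
      (Z : FreeAlgebra K (IBGen K n β))
      (hZ : RingQuot.mkAlgHom K (XBRel n β m N)
          ((1 - XmonOf uX uXi mA0) ^ 2 * ((1 - XmonOf uX uXi mR1A0) ^ 2 * (Z * ue i))) =
        RingQuot.mkAlgHom K (XBRel n β m N) (ue i)) :
      IBRel p q n β m N (ufour h2 i)
        (((p - p⁻¹) ^ 2) •
          (uφ ⟨0, by omega⟩ * ((1 - XmonOf uX uXi mA1) *
            (XmonOf uX uXi mA0 * ((1 + XmonOf uX uXi mA1) *
              ((1 + XmonOf uX uXi mR0A1) *
                ((q • (1 : FreeAlgebra K (IBGen K n β)) - q⁻¹ • XmonOf uX uXi mR0A1) *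
                  (Z * ue i))))))))
  | four5 (i) (h2 : 1 < n)
      (h : ¬ib4c1 (i.1 ⟨0, Nat.lt_of_succ_lt h2⟩) (i.1 ⟨1, h2⟩) ∧
           ¬ib4c2 (i.1 ⟨0, Nat.lt_of_succ_lt h2⟩) (i.1 ⟨1, h2⟩) ∧
           ¬ib4c3 (i.1 ⟨0, Nat.lt_of_succ_lt h2⟩) (i.1 ⟨1, h2⟩) ∧
           ¬ib4c4 (i.1 ⟨0, Nat.lt_of_succ_lt h2⟩) (i.1 ⟨1, h2⟩)) :
      IBRel p q n β m N (ufour h2 i) 0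

/-- The intermediary algebra `𝕀_N` of Definition 5.1. -/
abbrev IB (p q : K) (n : ℕ) (β : Finset (Fin n → K)) (m : K →₀ ℕ) (N : ℕ) : Type :=
  RingQuot (IBRel p q n β m N)

/-! ### Formal power series helpers -/

/-- Composition `f ∘ g` of univariate power series (intended for `g` with zero constant
term, in which case this is the substitution of `g` into `f`). -/
def comp1 (f g : PowerSeries K) : PowerSeries K :=
  PowerSeries.mk fun d => ∑ k ∈ Finset.range (d + 1),
    PowerSeries.coeff (R := K) k f * PowerSeries.coeff (R := K) d (g ^ k)

/-- The power series `f(z) = z + z/(1-z)` used for the type B isomorphism. -/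
def fVV : PowerSeries K := PowerSeries.X + PowerSeries.X * (1 - PowerSeries.X)⁻¹

/-- The embedding `K[[z]] → K[[y_1,…,y_n]]`, `z ↦ y_a`. -/
def emb1 (a : Fin n) (h : PowerSeries K) : MvPowerSeries (Fin n) K :=
  fun d => if d.support ⊆ {a} then PowerSeries.coeff (R := K) (d a) h else 0

/-- The embedding `K[[z,z']] → K[[y_1,…,y_n]]`, `z ↦ y_a`, `z' ↦ y_b` (for `a ≠ b`). -/
def emb2 (a b : Fin n) (P : MvPowerSeries (Fin 2) K) : MvPowerSeries (Fin n) K :=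
  fun d => if d.support ⊆ {a, b} then
    MvPowerSeries.coeff (σ := Fin 2) (R := K) (Finsupp.single 0 (d a) + Finsupp.single 1 (d b)) P else 0

/-- The action of a permutation of the variables on `K[[y_1,…,y_n]]`. -/
def permPS (σ : Equiv.Perm (Fin n)) (P : MvPowerSeries (Fin n) K) :
    MvPowerSeries (Fin n) K :=
  fun d => MvPowerSeries.coeff (R := K) (Finsupp.equivMapDomain σ d) P

/-- The action of `r_0` (`y_1 ↦ -y_1`) on `K[[y_1,…,y_n]]`. -/
def negFirst (h0 : 0 < n) (P : MvPowerSeries (Fin n) K) : MvPowerSeries (Fin n) K :=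
  fun d => (-1 : K) ^ d ⟨0, h0⟩ * MvPowerSeries.coeff (R := K) d P

/-- `X_k(i) = i_k (1 - g(y_k))` as an element of `K[[y_1,…,y_n]]`. -/
def XofI (g : PowerSeries K) (i : Fin n → K) (k : Fin n) : MvPowerSeries (Fin n) K :=
  MvPowerSeries.C (σ := Fin n) (R := K) (i k) * (1 - emb1 k g)

/-- `X̄_1(i) = X_1(i)⁻¹ = i_1⁻¹ (1 - g(y_1))⁻¹`. -/
def XbarofI (g : PowerSeries K) (i : Fin n → K) (h0 : 0 < n) : MvPowerSeries (Fin n) K :=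
  MvPowerSeries.C (σ := Fin n) (R := K) (i ⟨0, h0⟩)⁻¹ * (1 - emb1 ⟨0, h0⟩ g)⁻¹

/-- The evaluated series `Q_k(i) ∈ K[[y_k, y_{k+1}]] ⊆ K[[y_1,…,y_n]]`. -/
def Qev {n : ℕ} (Q : Fin (n - 1) → K → K → MvPowerSeries (Fin 2) K)
    (c : Fin (n - 1)) (i : Fin n → K) : MvPowerSeries (Fin n) K :=
  emb2 (lo c) (hi c) (Q c (i (lo c)) (i (hi c)))

/-- Condition (★1). -/
def Star1 (q : K) (g : PowerSeries K) (S : Set K) (n : ℕ)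
    (Q : Fin (n - 1) → K → K → MvPowerSeries (Fin 2) K) : Prop :=
  ∀ i : Fin n → K, (∀ k, i k ∈ S) → ∀ c : Fin (n - 1), i (lo c) = i (hi c) →
    Qev Q c i * (emb1 (hi c) g - emb1 (lo c) g) =
      MvPowerSeries.C (σ := Fin n) (R := K) (i (lo c))⁻¹ *
        ((MvPowerSeries.C (σ := Fin n) (R := K) q⁻¹ * XofI g i (lo c) -
            MvPowerSeries.C (σ := Fin n) (R := K) q * XofI g i (hi c)) *
          (MvPowerSeries.X (hi c) - MvPowerSeries.X (lo c)))

/-- The product `{}^{r_k}Q_k(r_k(i)) ⋅ Q_k(i)`. -/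
def QQ2 {n : ℕ} (Q : Fin (n - 1) → K → K → MvPowerSeries (Fin 2) K)
    (c : Fin (n - 1)) (i : Fin n → K) : MvPowerSeries (Fin n) K :=
  permPS (Equiv.swap (lo c) (hi c)) (Qev Q c (sw c i)) * Qev Q c i

/-- `(X_k(i) - X_{k+1}(i))(X_{k+1}(i) - X_k(i))`. -/
def DD2 (g : PowerSeries K) (i : Fin n → K) (c : Fin (n - 1)) : MvPowerSeries (Fin n) K :=
  (XofI g i (lo c) - XofI g i (hi c)) * (XofI g i (hi c) - XofI g i (lo c))

/-- `(qX_k(i) - q⁻¹X_{k+1}(i))(qX_{k+1}(i) - q⁻¹X_k(i))`. -/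
def NN2 (q : K) (g : PowerSeries K) (i : Fin n → K) (c : Fin (n - 1)) :
    MvPowerSeries (Fin n) K :=
  (MvPowerSeries.C (σ := Fin n) (R := K) q * XofI g i (lo c) -
      MvPowerSeries.C (σ := Fin n) (R := K) q⁻¹ * XofI g i (hi c)) *
    (MvPowerSeries.C (σ := Fin n) (R := K) q * XofI g i (hi c) -
      MvPowerSeries.C (σ := Fin n) (R := K) q⁻¹ * XofI g i (lo c))

/-- Condition (★2). -/
def Star2 (q : K) (g : PowerSeries K) (S : Set K) (n : ℕ)
    (Q : Fin (n - 1) → K → K → MvPowerSeries (Fin 2) K) : Prop :=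
  ∀ i : Fin n → K, (∀ k, i k ∈ S) → ∀ c : Fin (n - 1),
    (qnon q (i (lo c)) (i (hi c)) → QQ2 Q c i * DD2 g i c = NN2 q g i c) ∧
    (qbak q (i (lo c)) (i (hi c)) →
      QQ2 Q c i * ((MvPowerSeries.X (hi c) - MvPowerSeries.X (lo c)) * DD2 g i c) =
        NN2 q g i c) ∧
    (qarr q (i (lo c)) (i (hi c)) →
      QQ2 Q c i * ((MvPowerSeries.X (lo c) - MvPowerSeries.X (hi c)) * DD2 g i c) =
        NN2 q g i c) ∧
    (qdbl q (i (lo c)) (i (hi c)) →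
      QQ2 Q c i * ((MvPowerSeries.X (hi c) - MvPowerSeries.X (lo c)) *
        ((MvPowerSeries.X (lo c) - MvPowerSeries.X (hi c)) * DD2 g i c)) = NN2 q g i c)

/-- Condition (★3). -/
def Star3 (S : Set K) (n : ℕ)
    (Q : Fin (n - 1) → K → K → MvPowerSeries (Fin 2) K) : Prop :=
  ∀ i : Fin n → K, (∀ k, i k ∈ S) → ∀ c c' : Fin (n - 1), c'.1 = c.1 + 1 →
    permPS (Equiv.swap (lo c) (hi c)) (Qev Q c' (sw c' (sw c i))) =
      permPS (Equiv.swap (lo c') (hi c')) (Qev Q c (sw c (sw c' i)))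

/-- Condition (★4). -/
def Star4 (p : K) (g : PowerSeries K) (S : Set K) (n : ℕ) (Q0 : K → PowerSeries K) : Prop :=
  ∀ i : Fin n → K, (∀ k, i k ∈ S) → ∀ h0 : 0 < n, (i ⟨0, h0⟩)⁻¹ = i ⟨0, h0⟩ →
    emb1 ⟨0, h0⟩ (Q0 (i ⟨0, h0⟩)) =
      MvPowerSeries.C (σ := Fin n) (R := K) (i ⟨0, h0⟩)⁻¹ *
        (MvPowerSeries.C (σ := Fin n) (R := K) p⁻¹ * XbarofI g i h0 -
          MvPowerSeries.C (σ := Fin n) (R := K) p * XofI g i ⟨0, h0⟩)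

/-- The product `{}^{r_0}Q_0(r_0(i)) ⋅ Q_0(i)`. -/
def QQ0 {n : ℕ} (Q0 : K → PowerSeries K) (h0 : 0 < n) (i : Fin n → K) :
    MvPowerSeries (Fin n) K :=
  negFirst h0 (emb1 ⟨0, h0⟩ (Q0 (i ⟨0, h0⟩)⁻¹)) * emb1 ⟨0, h0⟩ (Q0 (i ⟨0, h0⟩))

/-- `(X̄_1(i) - X_1(i))(X_1(i) - X̄_1(i))`. -/
def DD0 (g : PowerSeries K) (h0 : 0 < n) (i : Fin n → K) : MvPowerSeries (Fin n) K :=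
  (XbarofI g i h0 - XofI g i ⟨0, h0⟩) * (XofI g i ⟨0, h0⟩ - XbarofI g i h0)

/-- `(pX̄_1(i) - p⁻¹X_1(i))(pX_1(i) - p⁻¹X̄_1(i))`. -/
def NN0 (p : K) (g : PowerSeries K) (h0 : 0 < n) (i : Fin n → K) :
    MvPowerSeries (Fin n) K :=
  (MvPowerSeries.C (σ := Fin n) (R := K) p * XbarofI g i h0 -
      MvPowerSeries.C (σ := Fin n) (R := K) p⁻¹ * XofI g i ⟨0, h0⟩) *
    (MvPowerSeries.C (σ := Fin n) (R := K) p * XofI g i ⟨0, h0⟩ -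
      MvPowerSeries.C (σ := Fin n) (R := K) p⁻¹ * XbarofI g i h0)

/-- Condition (★5). -/
def Star5 (p : K) (g : PowerSeries K) (S : Set K) (n : ℕ) (Q0 : K → PowerSeries K) : Prop :=
  ∀ i : Fin n → K, (∀ k, i k ∈ S) → ∀ h0 : 0 < n,
    (pnon p (i ⟨0, h0⟩) → QQ0 Q0 h0 i * DD0 g h0 i = NN0 p g h0 i) ∧
    (parr p (i ⟨0, h0⟩) →
      QQ0 Q0 h0 i * (MvPowerSeries.X ⟨0, h0⟩ * DD0 g h0 i) = NN0 p g h0 i) ∧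
    (pbak p (i ⟨0, h0⟩) →
      QQ0 Q0 h0 i * (-MvPowerSeries.X ⟨0, h0⟩ * DD0 g h0 i) = NN0 p g h0 i) ∧
    (pdbl p (i ⟨0, h0⟩) →
      QQ0 Q0 h0 i * (-(MvPowerSeries.X ⟨0, h0⟩ * MvPowerSeries.X ⟨0, h0⟩) * DD0 g h0 i) =
        NN0 p g h0 i)

/-- Condition (★6). -/
def Star6 (S : Set K) (n : ℕ) (Q0 : K → PowerSeries K)
    (Q : Fin (n - 1) → K → K → MvPowerSeries (Fin 2) K) : Prop :=
  ∀ i : Fin n → K, (∀ k, i k ∈ S) → ∀ h2 : 1 < n,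
    (permPS (Equiv.swap ⟨0, Nat.lt_of_succ_lt h2⟩ ⟨1, h2⟩)
        (negFirst (Nat.lt_of_succ_lt h2)
          (permPS (Equiv.swap ⟨0, Nat.lt_of_succ_lt h2⟩ ⟨1, h2⟩)
            (emb1 ⟨0, Nat.lt_of_succ_lt h2⟩ (Q0 (i ⟨0, Nat.lt_of_succ_lt h2⟩))))) =
      emb1 ⟨0, Nat.lt_of_succ_lt h2⟩ (Q0 (i ⟨0, Nat.lt_of_succ_lt h2⟩))) ∧
    (negFirst (Nat.lt_of_succ_lt h2)
        (permPS (Equiv.swap ⟨0, Nat.lt_of_succ_lt h2⟩ ⟨1, h2⟩)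
          (negFirst (Nat.lt_of_succ_lt h2)
            (Qev Q ⟨0, by omega⟩
              (invMove (Nat.lt_of_succ_lt h2)
                (sw ⟨0, by omega⟩ (invMove (Nat.lt_of_succ_lt h2) i)))))) =
      Qev Q ⟨0, by omega⟩ i)

/-! ### Dimension vectors -/

/-- The dimension vector attached to a tuple: `dimvec i s = #{k : i_k ∈ {s, s⁻¹}}`. -/
def dimvec (i : Fin n → K) : K → ℕ := fun s =>
  (Finset.univ.filter fun k => i k = s ∨ i k = s⁻¹).card

end PdAW

end
namespace PdAW


noncomputable section Statement10Aux

variable {K : Type} [Field K] {n : ℕ}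

open MvPowerSeries

def pi2 (a b : Fin n) (x : Fin n →₀ ℕ) : Fin 2 →₀ ℕ :=
  Finsupp.single 0 (x a) + Finsupp.single 1 (x b)

def rho2 (a b : Fin n) (y : Fin 2 →₀ ℕ) : Fin n →₀ ℕ :=
  Finsupp.single a (y 0) + Finsupp.single b (y 1)

lemma emb2_coeff (a b : Fin n) (P : MvPowerSeries (Fin 2) K) (d : Fin n →₀ ℕ) :
    emb2 a b P d = if d.support ⊆ {a, b} then coeff (R := K) (pi2 a b d) P else 0 := rfl

lemma fin2_decomp (d : Fin 2 →₀ ℕ) :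
    Finsupp.single (0 : Fin 2) (d 0) + Finsupp.single 1 (d 1) = d := by
  ext x; fin_cases x <;> simp [Finsupp.single_apply]

lemma pi2_apply0 (a b : Fin n) (x : Fin n →₀ ℕ) : pi2 a b x 0 = x a := by
  simp [pi2, Finsupp.single_apply]

lemma pi2_apply1 (a b : Fin n) (x : Fin n →₀ ℕ) : pi2 a b x 1 = x b := by
  simp [pi2, Finsupp.single_apply]

lemma pi2_add (a b : Fin n) (x y : Fin n →₀ ℕ) :
    pi2 a b (x + y) = pi2 a b x + pi2 a b y := by
  ext t; simp [pi2, Finsupp.single_apply]; split_ifs <;> omega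

lemma pi2_zero (a b : Fin n) : pi2 a b 0 = 0 := by simp [pi2]

lemma rho2_add (a b : Fin n) (x y : Fin 2 →₀ ℕ) :
    rho2 a b (x + y) = rho2 a b x + rho2 a b y := by
  ext t; simp [rho2, Finsupp.single_apply]; split_ifs <;> omega

lemma rho2_apply_left (a b : Fin n) (hab : a ≠ b) (y : Fin 2 →₀ ℕ) : rho2 a b y a = y 0 := by
  simp [rho2, Finsupp.single_apply, Ne.symm hab]

lemma rho2_apply_right (a b : Fin n) (hab : a ≠ b) (y : Fin 2 →₀ ℕ) : rho2 a b y b = y 1 := by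
  simp [rho2, Finsupp.single_apply, hab]

lemma pi2_rho2 (a b : Fin n) (hab : a ≠ b) (y : Fin 2 →₀ ℕ) : pi2 a b (rho2 a b y) = y := by
  unfold pi2
  rw [rho2_apply_left a b hab, rho2_apply_right a b hab, fin2_decomp]

lemma rho2_pi2 (a b : Fin n) (hab : a ≠ b) (x : Fin n →₀ ℕ) (hx : x.support ⊆ {a, b}) :
    rho2 a b (pi2 a b x) = x := by
  have hx' : ∀ t, t ≠ a → t ≠ b → x t = 0 := by
    intro t hta htb
    by_contra hc
    have := hx (Finsupp.mem_support_iff.mpr hc)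
    simp [hta, htb] at this
  ext t
  rw [rho2, Finsupp.add_apply, pi2_apply0, pi2_apply1]
  by_cases hta : t = a
  · subst hta; simp [Finsupp.single_apply, Ne.symm hab]
  · by_cases htb : t = b
    · subst htb; simp [Finsupp.single_apply, Ne.symm hta]
    · simp [Finsupp.single_apply, Ne.symm hta, Ne.symm htb, hx' t hta htb]


lemma supp_le_of_le (x d : Fin n →₀ ℕ) (hle : ∀ t, x t ≤ d t) (hd : d.support ⊆ ({a, b} : Finset (Fin n))) :
    x.support ⊆ ({a, b} : Finset (Fin n)) := by
  intro t ht
  rw [Finsupp.mem_support_iff] at ht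
  have hdt : d t ≠ 0 := by have := hle t; omega
  exact hd (Finsupp.mem_support_iff.mpr hdt)

lemma emb2_mul (a b : Fin n) (hab : a ≠ b) (P Q : MvPowerSeries (Fin 2) K) :
    emb2 a b (P * Q) = emb2 a b P * emb2 a b Q := by
  funext d
  have hrhs : (emb2 a b P * emb2 a b Q) d
      = ∑ p ∈ Finset.HasAntidiagonal.antidiagonal d, emb2 a b P p.1 * emb2 a b Q p.2 :=
    coeff_mul d _ _
  rw [hrhs, emb2_coeff]
  by_cases hd : d.support ⊆ ({a, b} : Finset (Fin n))
  · rw [if_pos hd, coeff_mul]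
    have hsub : ∀ x y : Fin n →₀ ℕ, x + y = d →
        x.support ⊆ ({a, b} : Finset (Fin n)) ∧ y.support ⊆ ({a, b} : Finset (Fin n)) := by
      intro x y hp
      constructor <;> refine supp_le_of_le _ d (fun t => ?_) hd <;>
        · have : x t + y t = d t := by rw [← Finsupp.add_apply, hp]
          omega
    refine Finset.sum_nbij' (fun p => (rho2 a b p.1, rho2 a b p.2))
      (fun p => (pi2 a b p.1, pi2 a b p.2)) ?_ ?_ ?_ ?_ ?_
    · rintro ⟨x, y⟩ hp
      rw [Finset.HasAntidiagonal.mem_antidiagonal] at hp ⊢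
      simp only at hp ⊢
      rw [← rho2_add, hp, rho2_pi2 a b hab d hd]
    · rintro ⟨x, y⟩ hp
      rw [Finset.HasAntidiagonal.mem_antidiagonal] at hp ⊢
      simp only at hp ⊢
      rw [← pi2_add, hp]
    · rintro ⟨x, y⟩ _
      simp only [Prod.mk.injEq]
      exact ⟨pi2_rho2 a b hab x, pi2_rho2 a b hab y⟩
    · rintro ⟨x, y⟩ hp
      rw [Finset.HasAntidiagonal.mem_antidiagonal] at hp
      simp only at hp
      obtain ⟨hx, hy⟩ := hsub x y hp
      simp only [Prod.mk.injEq]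
      exact ⟨rho2_pi2 a b hab x hx, rho2_pi2 a b hab y hy⟩
    · rintro ⟨x, y⟩ hp
      rw [Finset.HasAntidiagonal.mem_antidiagonal] at hp
      simp only at hp ⊢
      obtain ⟨hx, hy⟩ := hsub (rho2 a b x) (rho2 a b y)
        (by rw [← rho2_add, hp, rho2_pi2 a b hab d hd])
      rw [emb2_coeff, emb2_coeff, if_pos hx, if_pos hy,
        pi2_rho2 a b hab x, pi2_rho2 a b hab y]
  · rw [if_neg hd]
    symm
    refine Finset.sum_eq_zero ?_
    rintro ⟨x, y⟩ hp
    rw [Finset.HasAntidiagonal.mem_antidiagonal] at hp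
    simp only at hp ⊢
    obtain ⟨t, htd, ht⟩ := Finset.not_subset.mp hd
    rw [Finsupp.mem_support_iff] at htd
    have hxy : x t + y t = d t := by rw [← Finsupp.add_apply, hp]
    rcases Nat.eq_zero_or_pos (x t) with hxt | hxt
    · have hyt : y t ≠ 0 := by omega
      have hns : ¬ y.support ⊆ ({a, b} : Finset (Fin n)) := by
        rw [Finset.not_subset]
        exact ⟨t, Finsupp.mem_support_iff.mpr hyt, ht⟩
      rw [emb2_coeff a b Q, if_neg hns, mul_zero]
    · have hns : ¬ x.support ⊆ ({a, b} : Finset (Fin n)) := by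
        rw [Finset.not_subset]
        exact ⟨t, Finsupp.mem_support_iff.mpr (by omega), ht⟩
      rw [emb2_coeff a b P, if_neg hns, zero_mul]

lemma fin2_subset_univ (y : Fin 2 →₀ ℕ) : y.support ⊆ ({1, 0} : Finset (Fin 2)) := by
  intro t _
  fin_cases t <;> simp

lemma emb2_add (a b : Fin n) (P Q : MvPowerSeries (Fin 2) K) :
    emb2 a b (P + Q) = emb2 a b P + emb2 a b Q := by
  funext d
  show _ = emb2 a b P d + emb2 a b Q d
  rw [emb2_coeff, emb2_coeff, emb2_coeff]
  split <;> simp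

lemma emb2_neg (a b : Fin n) (P : MvPowerSeries (Fin 2) K) :
    emb2 a b (-P) = -emb2 a b P := by
  funext d
  show _ = -(emb2 a b P d)
  rw [emb2_coeff, emb2_coeff]
  split <;> simp

lemma emb2_sub (a b : Fin n) (P Q : MvPowerSeries (Fin 2) K) :
    emb2 a b (P - Q) = emb2 a b P - emb2 a b Q := by
  rw [sub_eq_add_neg, emb2_add, emb2_neg, sub_eq_add_neg]

lemma emb2_C (a b : Fin n) (r : K) :
    emb2 a b (MvPowerSeries.C (σ := Fin 2) (R := K) r) = MvPowerSeries.C (σ := Fin n) (R := K) r := by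
  funext d
  rw [emb2_coeff]
  show _ = coeff (R := K) d (MvPowerSeries.C (σ := Fin n) (R := K) r)
  by_cases hd : d.support ⊆ ({a, b} : Finset (Fin n))
  · rw [if_pos hd, coeff_C, coeff_C]
    by_cases hd0 : d = 0
    · subst hd0; rw [if_pos (by rw [pi2_zero]), if_pos rfl]
    · rw [if_neg hd0, if_neg ?_]
      intro hc
      apply hd0
      ext t
      by_cases hta : t = a
      · subst hta
        have := congrArg (fun z => z 0) hc
        simpa [pi2_apply0] using this
      · by_cases htb : t = b
        · subst htb
          have := congrArg (fun z => z 1) hc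
          simpa [pi2_apply1] using this
        · by_contra hzz
          have := hd (Finsupp.mem_support_iff.mpr hzz)
          simp [hta, htb] at this
  · rw [if_neg hd, coeff_C, if_neg ?_]
    intro hc; subst hc; simp at hd

lemma emb2_one (a b : Fin n) : emb2 a b (1 : MvPowerSeries (Fin 2) K) = 1 := by
  have h := emb2_C (K := K) a b 1
  rwa [map_one, map_one] at h

lemma pi2_eq_single0 (a b : Fin n) (hab : a ≠ b) (d : Fin n →₀ ℕ)
    (hd : d.support ⊆ ({a, b} : Finset (Fin n))) :
    pi2 a b d = Finsupp.single 0 1 ↔ d = Finsupp.single a 1 := by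
  constructor
  · intro hc
    have h0 := congrArg (fun z => z 0) hc
    have h1 := congrArg (fun z => z 1) hc
    simp only [pi2_apply0, pi2_apply1, Finsupp.single_apply] at h0 h1
    norm_num at h0 h1
    ext t
    by_cases hta : t = a
    · subst hta; simp [Finsupp.single_apply, h0]
    · by_cases htb : t = b
      · subst htb; simp [Finsupp.single_apply, Ne.symm hta, h1]
      · have : d t = 0 := by
          by_contra hzz
          have := hd (Finsupp.mem_support_iff.mpr hzz)
          simp [hta, htb] at this
        simp [Finsupp.single_apply, Ne.symm hta, this]
  · intro hc
    subst hc
    unfold pi2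
    rw [Finsupp.single_eq_same, Finsupp.single_eq_of_ne (Ne.symm hab)]
    simp

lemma pi2_eq_single1 (a b : Fin n) (hab : a ≠ b) (d : Fin n →₀ ℕ)
    (hd : d.support ⊆ ({a, b} : Finset (Fin n))) :
    pi2 a b d = Finsupp.single 1 1 ↔ d = Finsupp.single b 1 := by
  constructor
  · intro hc
    have h0 := congrArg (fun z => z 0) hc
    have h1 := congrArg (fun z => z 1) hc
    simp only [pi2_apply0, pi2_apply1, Finsupp.single_apply] at h0 h1
    norm_num at h0 h1
    ext t
    by_cases hta : t = a
    · subst hta; simp [Finsupp.single_apply, hab, Ne.symm hab, h0]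
    · by_cases htb : t = b
      · subst htb; simp [Finsupp.single_apply, h1]
      · have : d t = 0 := by
          by_contra hzz
          have := hd (Finsupp.mem_support_iff.mpr hzz)
          simp [hta, htb] at this
        simp [Finsupp.single_apply, Ne.symm htb, this]
  · intro hc
    subst hc
    unfold pi2
    rw [Finsupp.single_eq_same, Finsupp.single_eq_of_ne hab]
    simp

lemma emb2_X0 (a b : Fin n) (hab : a ≠ b) :
    emb2 a b (X (0 : Fin 2) : MvPowerSeries (Fin 2) K) = X a := by
  funext d
  rw [emb2_coeff]
  show _ = coeff (R := K) d (X a)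
  by_cases hd : d.support ⊆ ({a, b} : Finset (Fin n))
  · rw [if_pos hd, coeff_X, coeff_X]
    by_cases hc : pi2 a b d = Finsupp.single 0 1
    · rw [if_pos hc, if_pos ((pi2_eq_single0 a b hab d hd).mp hc)]
    · rw [if_neg hc, if_neg (fun hc2 => hc ((pi2_eq_single0 a b hab d hd).mpr hc2))]
  · rw [if_neg hd, coeff_X, if_neg ?_]
    intro hc; subst hc
    apply hd
    intro t ht
    rw [Finsupp.mem_support_iff, Finsupp.single_apply] at ht
    by_cases hta : t = a
    · simp [hta]
    · simp [Ne.symm hta] at ht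

lemma emb2_X1 (a b : Fin n) (hab : a ≠ b) :
    emb2 a b (X (1 : Fin 2) : MvPowerSeries (Fin 2) K) = X b := by
  funext d
  rw [emb2_coeff]
  show _ = coeff (R := K) d (X b)
  by_cases hd : d.support ⊆ ({a, b} : Finset (Fin n))
  · rw [if_pos hd, coeff_X, coeff_X]
    by_cases hc : pi2 a b d = Finsupp.single 1 1
    · rw [if_pos hc, if_pos ((pi2_eq_single1 a b hab d hd).mp hc)]
    · rw [if_neg hc, if_neg (fun hc2 => hc ((pi2_eq_single1 a b hab d hd).mpr hc2))]
  · rw [if_neg hd, coeff_X, if_neg ?_]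
    intro hc; subst hc
    apply hd
    intro t ht
    rw [Finsupp.mem_support_iff, Finsupp.single_apply] at ht
    by_cases htb : t = b
    · simp [htb]
    · simp [Ne.symm htb] at ht

lemma emb1_coeff (a : Fin n) (g : PowerSeries K) (d : Fin n →₀ ℕ) :
    emb1 a g d = if d.support ⊆ ({a} : Finset (Fin n)) then PowerSeries.coeff (R := K) (d a) g else 0 :=
  rfl

lemma fin2_supp_single0 (y : Fin 2 →₀ ℕ) :
    y.support ⊆ ({(0 : Fin 2)} : Finset (Fin 2)) ↔ y 1 = 0 := by
  constructor
  · intro h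
    by_contra hc
    have := h (Finsupp.mem_support_iff.mpr hc)
    simp at this
  · intro h t ht
    rw [Finsupp.mem_support_iff] at ht
    fin_cases t
    · simp
    · simp [h] at ht

lemma fin2_supp_single1 (y : Fin 2 →₀ ℕ) :
    y.support ⊆ ({(1 : Fin 2)} : Finset (Fin 2)) ↔ y 0 = 0 := by
  constructor
  · intro h
    by_contra hc
    have := h (Finsupp.mem_support_iff.mpr hc)
    simp at this
  · intro h t ht
    rw [Finsupp.mem_support_iff] at ht
    fin_cases t
    · simp [h] at ht
    · simp

lemma emb2_emb1_0 (a b : Fin n) (hab : a ≠ b) (g : PowerSeries K) :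
    emb2 a b (emb1 0 g) = emb1 a g := by
  funext d
  rw [emb2_coeff, emb1_coeff]
  by_cases hd : d.support ⊆ ({a, b} : Finset (Fin n))
  · show (if _ then emb1 0 g (pi2 a b d) else _) = _
    rw [if_pos hd, emb1_coeff, pi2_apply0]
    by_cases hb0 : d b = 0
    · rw [if_pos ((fin2_supp_single0 _).mpr (by rw [pi2_apply1]; exact hb0)), if_pos ?_]
      intro t ht
      have := hd ht
      rw [Finsupp.mem_support_iff] at ht
      simp only [Finset.mem_insert, Finset.mem_singleton] at this
      rcases this with h | h
      · simp [h]
      · subst h; exact absurd hb0 ht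
    · rw [if_neg (fun hc => hb0 (by rw [← pi2_apply1 a b d]; exact (fin2_supp_single0 _).mp hc)),
        if_neg ?_]
      intro hc
      have := hc (Finsupp.mem_support_iff.mpr hb0)
      simp only [Finset.mem_singleton] at this
      exact hab this.symm
  · rw [if_neg hd, if_neg ?_]
    intro hc
    exact hd (hc.trans (by intro t ht; simp only [Finset.mem_singleton] at ht; simp [ht]))

lemma emb2_emb1_1 (a b : Fin n) (hab : a ≠ b) (g : PowerSeries K) :
    emb2 a b (emb1 1 g) = emb1 b g := by
  funext d
  rw [emb2_coeff, emb1_coeff]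
  by_cases hd : d.support ⊆ ({a, b} : Finset (Fin n))
  · show (if _ then emb1 1 g (pi2 a b d) else _) = _
    rw [if_pos hd, emb1_coeff, pi2_apply1]
    by_cases ha0 : d a = 0
    · rw [if_pos ((fin2_supp_single1 _).mpr (by rw [pi2_apply0]; exact ha0)), if_pos ?_]
      intro t ht
      have := hd ht
      rw [Finsupp.mem_support_iff] at ht
      simp only [Finset.mem_insert, Finset.mem_singleton] at this
      rcases this with h | h
      · subst h; exact absurd ha0 ht
      · simp [h]
    · rw [if_neg (fun hc => ha0 (by rw [← pi2_apply0 a b d]; exact (fin2_supp_single1 _).mp hc)),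
        if_neg ?_]
      intro hc
      have := hc (Finsupp.mem_support_iff.mpr ha0)
      simp only [Finset.mem_singleton] at this
      exact hab this
  · rw [if_neg hd, if_neg ?_]
    intro hc
    exact hd (hc.trans (by intro t ht; simp only [Finset.mem_singleton] at ht; simp [ht]))

lemma emb2_constantCoeff (a b : Fin n) (P : MvPowerSeries (Fin 2) K) :
    constantCoeff (σ := Fin n) (R := K) (emb2 a b P) = constantCoeff (σ := Fin 2) (R := K) P := by
  show emb2 a b P 0 = P 0
  rw [emb2_coeff, if_pos (by simp), pi2_zero]
  rfl

lemma permPS_emb2 (σ : Equiv.Perm (Fin n)) (a b : Fin n) (P : MvPowerSeries (Fin 2) K) :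
    permPS σ (emb2 a b P) = emb2 (σ⁻¹ a) (σ⁻¹ b) P := by
  funext d
  show emb2 a b P (Finsupp.equivMapDomain σ d) = emb2 (σ⁻¹ a) (σ⁻¹ b) P d
  have he : ∀ x, (Finsupp.equivMapDomain σ d) x = d (σ.symm x) :=
    fun x => Finsupp.equivMapDomain_apply σ d x
  rw [emb2_coeff, emb2_coeff]
  have hsupp : (Finsupp.equivMapDomain σ d).support ⊆ ({a, b} : Finset (Fin n)) ↔
      d.support ⊆ ({σ⁻¹ a, σ⁻¹ b} : Finset (Fin n)) := by
    constructor
    · intro h t ht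
      rw [Finsupp.mem_support_iff] at ht
      have hmem : σ t ∈ (Finsupp.equivMapDomain σ d).support := by
        rw [Finsupp.mem_support_iff, he, Equiv.symm_apply_apply]
        exact ht
      have h3 := h hmem
      simp only [Finset.mem_insert, Finset.mem_singleton] at h3 ⊢
      rcases h3 with h2 | h2 <;> [left; right] <;>
        · show t = σ.symm _
          rw [← h2, Equiv.symm_apply_apply]
    · intro h t ht
      rw [Finsupp.mem_support_iff, he] at ht
      have h3 := h (Finsupp.mem_support_iff.mpr ht)
      simp only [Finset.mem_insert, Finset.mem_singleton] at h3 ⊢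
      rcases h3 with h2 | h2 <;> [left; right] <;>
        · have h2' : σ.symm t = σ.symm _ := h2
          exact σ.symm.injective h2'
  have hpi : pi2 a b (Finsupp.equivMapDomain σ d) = pi2 (σ⁻¹ a) (σ⁻¹ b) d := by
    unfold pi2
    rw [he a, he b]
    rfl
  by_cases h1 : (Finsupp.equivMapDomain σ d).support ⊆ ({a, b} : Finset (Fin n))
  · rw [if_pos h1, if_pos (hsupp.mp h1), hpi]
  · rw [if_neg h1, if_neg (fun hc => h1 (hsupp.mpr hc))]

/-- variable swap on two-variable power series -/
def Sw (P : MvPowerSeries (Fin 2) K) : MvPowerSeries (Fin 2) K := emb2 1 0 P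

lemma h10 : (1 : Fin 2) ≠ 0 := by decide

lemma emb2_swap (a b : Fin n) (P : MvPowerSeries (Fin 2) K) :
    emb2 b a P = emb2 a b (Sw P) := by
  funext d
  rw [emb2_coeff, emb2_coeff]
  have hpair : ({b, a} : Finset (Fin n)) = {a, b} := Finset.pair_comm b a
  by_cases hd : d.support ⊆ ({a, b} : Finset (Fin n))
  · rw [if_pos (by rw [hpair]; exact hd), if_pos hd]
    show _ = emb2 1 0 P (pi2 a b d)
    rw [emb2_coeff, if_pos (fin2_subset_univ _)]
    have h2 : pi2 1 0 (pi2 a b d) = pi2 b a d := by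
      show Finsupp.single 0 ((pi2 a b d) 1) + Finsupp.single 1 ((pi2 a b d) 0) = _
      rw [pi2_apply0, pi2_apply1]
      rfl
    rw [h2]
  · rw [if_neg (by rw [hpair]; exact hd), if_neg hd]

lemma Sw_mul (P Q : MvPowerSeries (Fin 2) K) : Sw (P * Q) = Sw P * Sw Q :=
  emb2_mul 1 0 h10 P Q

lemma Sw_add (P Q : MvPowerSeries (Fin 2) K) : Sw (P + Q) = Sw P + Sw Q := emb2_add 1 0 P Q

lemma Sw_sub (P Q : MvPowerSeries (Fin 2) K) : Sw (P - Q) = Sw P - Sw Q := emb2_sub 1 0 P Q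

lemma Sw_neg (P : MvPowerSeries (Fin 2) K) : Sw (-P) = -Sw P := emb2_neg 1 0 P

lemma Sw_one : Sw (1 : MvPowerSeries (Fin 2) K) = 1 := emb2_one 1 0

lemma Sw_C (r : K) : Sw (MvPowerSeries.C (σ := Fin 2) (R := K) r) = MvPowerSeries.C (σ := Fin 2) (R := K) r :=
  emb2_C 1 0 r

lemma Sw_X0 : Sw (X (0 : Fin 2) : MvPowerSeries (Fin 2) K) = X 1 := emb2_X0 1 0 h10

lemma Sw_X1 : Sw (X (1 : Fin 2) : MvPowerSeries (Fin 2) K) = X 0 := emb2_X1 1 0 h10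

lemma Sw_emb1_0 (g : PowerSeries K) : Sw (emb1 (0 : Fin 2) g) = emb1 1 g := emb2_emb1_0 1 0 h10 g

lemma Sw_emb1_1 (g : PowerSeries K) : Sw (emb1 (1 : Fin 2) g) = emb1 0 g := emb2_emb1_1 1 0 h10 g

lemma Sw_constantCoeff (P : MvPowerSeries (Fin 2) K) :
    constantCoeff (σ := Fin 2) (R := K) (Sw P) = constantCoeff (σ := Fin 2) (R := K) P := emb2_constantCoeff 1 0 P

lemma Sw_inv (P : MvPowerSeries (Fin 2) K) (h : constantCoeff (σ := Fin 2) (R := K) P ≠ 0) :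
    Sw P⁻¹ = (Sw P)⁻¹ := by
  have h' : constantCoeff (σ := Fin 2) (R := K) (Sw P) ≠ 0 := by rwa [Sw_constantCoeff]
  have h1 : Sw P * Sw P⁻¹ = 1 := by
    rw [← Sw_mul, MvPowerSeries.mul_inv_cancel P h, Sw_one]
  calc Sw P⁻¹ = ((Sw P)⁻¹ * Sw P) * Sw P⁻¹ := by
        rw [MvPowerSeries.inv_mul_cancel _ h', one_mul]
    _ = (Sw P)⁻¹ * (Sw P * Sw P⁻¹) := by ring
    _ = (Sw P)⁻¹ := by rw [h1, mul_one]

/-- the slope series `u` with `(z' - z) u = g(z') - g(z)` -/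
def slope (g : PowerSeries K) : MvPowerSeries (Fin 2) K :=
  fun d => PowerSeries.coeff (R := K) (d 0 + d 1 + 1) g

lemma slope_constantCoeff (g : PowerSeries K) :
    constantCoeff (σ := Fin 2) (R := K) (slope g) = PowerSeries.coeff (R := K) 1 g := by
  show slope g 0 = _
  simp [slope]

lemma Sw_slope (g : PowerSeries K) : Sw (slope g) = slope g := by
  funext d
  show emb2 1 0 (slope g) d = slope g d
  rw [emb2_coeff, if_pos (fin2_subset_univ _)]
  show slope g (pi2 1 0 d) = slope g d
  show PowerSeries.coeff (R := K) ((pi2 1 0 d) 0 + (pi2 1 0 d) 1 + 1) g = _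
  rw [pi2_apply0, pi2_apply1]
  show _ = PowerSeries.coeff (R := K) (d 0 + d 1 + 1) g
  have h2 : d 1 + d 0 + 1 = d 0 + d 1 + 1 := by omega
  rw [h2]

lemma emb1_constantCoeff (a : Fin n) (g : PowerSeries K)
    (hg0 : PowerSeries.constantCoeff (R := K) g = 0) :
    constantCoeff (σ := Fin n) (R := K) (emb1 a g) = 0 := by
  show emb1 a g 0 = 0
  rw [emb1_coeff, if_pos (by simp)]
  simpa using hg0

lemma coeff_X_mul' (s : Fin 2) (u : MvPowerSeries (Fin 2) K) (d : Fin 2 →₀ ℕ) :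
    coeff (R := K) d (X s * u) =
      if Finsupp.single s 1 ≤ d then coeff (R := K) (d - Finsupp.single s 1) u else 0 := by
  rw [X, coeff_monomial_mul]
  split <;> simp

lemma slope_key (g : PowerSeries K) (hg0 : PowerSeries.constantCoeff (R := K) g = 0) :
    (X (1 : Fin 2) - X 0) * slope g = emb1 1 g - emb1 0 g := by
  apply MvPowerSeries.ext
  intro d
  rw [sub_mul, map_sub, map_sub, coeff_X_mul', coeff_X_mul']
  have hco : ∀ s : Fin 2, coeff (R := K) d (emb1 s g) = emb1 s g d := fun _ => rfl
  rw [hco, hco, emb1_coeff, emb1_coeff]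
  have hle : ∀ s : Fin 2, Finsupp.single s 1 ≤ d ↔ 1 ≤ d s := fun s => Finsupp.single_le_iff
  have hsub : ∀ s : Fin 2, coeff (R := K) (d - Finsupp.single s 1) (slope g)
      = PowerSeries.coeff (R := K)
          (((d - Finsupp.single s 1 : Fin 2 →₀ ℕ)) 0
            + ((d - Finsupp.single s 1 : Fin 2 →₀ ℕ)) 1 + 1) g := by
    intro s; rfl
  have htsub : ∀ s t : Fin 2, ((d - Finsupp.single s 1 : Fin 2 →₀ ℕ)) t
      = d t - Finsupp.single s 1 t :=
    fun s t => Finsupp.tsub_apply d (Finsupp.single s 1) t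
  rcases Nat.eq_zero_or_pos (d 0) with h0 | h0 <;> rcases Nat.eq_zero_or_pos (d 1) with h1 | h1
  · rw [if_neg (by rw [hle]; omega), if_neg (by rw [hle]; omega),
      if_pos ((fin2_supp_single1 d).mpr h0), if_pos ((fin2_supp_single0 d).mpr h1), h0, h1]
    simp [hg0]
  · rw [if_pos (by rw [hle]; omega), if_neg (by rw [hle]; omega),
      if_pos ((fin2_supp_single1 d).mpr h0),
      if_neg (fun hc => by have := (fin2_supp_single0 d).mp hc; omega), hsub]
    have e1 : ((d - Finsupp.single 1 1 : Fin 2 →₀ ℕ)) 0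
        + ((d - Finsupp.single 1 1 : Fin 2 →₀ ℕ)) 1 + 1 = d 1 := by
      rw [htsub, htsub]
      simp [Finsupp.single_apply]
      omega
    rw [e1]
  · rw [if_neg (by rw [hle]; omega), if_pos (by rw [hle]; omega),
      if_neg (fun hc => by have := (fin2_supp_single1 d).mp hc; omega),
      if_pos ((fin2_supp_single0 d).mpr h1), hsub]
    have e0 : ((d - Finsupp.single 0 1 : Fin 2 →₀ ℕ)) 0
        + ((d - Finsupp.single 0 1 : Fin 2 →₀ ℕ)) 1 + 1 = d 0 := by
      rw [htsub, htsub]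
      simp [Finsupp.single_apply]
      omega
    rw [e0]
  · rw [if_pos (by rw [hle]; omega), if_pos (by rw [hle]; omega),
      if_neg (fun hc => by have := (fin2_supp_single1 d).mp hc; omega),
      if_neg (fun hc => by have := (fin2_supp_single0 d).mp hc; omega), hsub, hsub]
    have e1 : ((d - Finsupp.single 1 1 : Fin 2 →₀ ℕ)) 0
        + ((d - Finsupp.single 1 1 : Fin 2 →₀ ℕ)) 1 + 1 = d 0 + d 1 := by
      rw [htsub, htsub]; simp [Finsupp.single_apply]; omega
    have e0 : ((d - Finsupp.single 0 1 : Fin 2 →₀ ℕ)) 0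
        + ((d - Finsupp.single 0 1 : Fin 2 →₀ ℕ)) 1 + 1 = d 0 + d 1 := by
      rw [htsub, htsub]; simp [Finsupp.single_apply]; omega
    rw [e0, e1]
    simp



lemma g1_ne {f g : PowerSeries K} (hfg : comp1 f g = PowerSeries.X) :
    PowerSeries.coeff (R := K) 1 g ≠ 0 := by
  have h := congrArg (PowerSeries.coeff (R := K) 1) hfg
  rw [comp1, PowerSeries.coeff_mk, PowerSeries.coeff_one_X] at h
  rw [Finset.sum_range_succ, Finset.sum_range_succ, Finset.sum_range_zero, zero_add,
    pow_zero, pow_one, PowerSeries.coeff_one] at h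
  norm_num at h
  intro hc
  rw [hc, mul_zero] at h
  exact one_ne_zero h.symm

/-- `A = i(1 - g(z))` -/
def Am (g : PowerSeries K) (i : K) : MvPowerSeries (Fin 2) K :=
  MvPowerSeries.C (σ := Fin 2) (R := K) i * (1 - emb1 0 g)

/-- `B = j(1 - g(z'))` -/
def Bm (g : PowerSeries K) (j : K) : MvPowerSeries (Fin 2) K :=
  MvPowerSeries.C (σ := Fin 2) (R := K) j * (1 - emb1 1 g)

/-- the two-variable series `Q(i,j)` -/
def Qd (q : K) (g : PowerSeries K) (i j : K) : MvPowerSeries (Fin 2) K :=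
  if i = j then
    (MvPowerSeries.C (σ := Fin 2) (R := K) q⁻¹ * (1 - emb1 0 g) -
      MvPowerSeries.C (σ := Fin 2) (R := K) q * (1 - emb1 1 g)) * (slope g)⁻¹
  else if j = q ^ 2 * i then
    -(MvPowerSeries.C (σ := Fin 2) (R := K) (q * i) * slope g * (Am g i - Bm g j)⁻¹)
  else
    (MvPowerSeries.C (σ := Fin 2) (R := K) q * Am g i - MvPowerSeries.C (σ := Fin 2) (R := K) q⁻¹ * Bm g j) *
      (Am g i - Bm g j)⁻¹

section TwoVar

variable (q : K) (g : PowerSeries K)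

lemma Am_cc (hg0 : PowerSeries.constantCoeff (R := K) g = 0) (i : K) :
    constantCoeff (σ := Fin 2) (R := K) (Am g i) = i := by
  simp [Am, emb1_constantCoeff _ _ hg0]

lemma Bm_cc (hg0 : PowerSeries.constantCoeff (R := K) g = 0) (j : K) :
    constantCoeff (σ := Fin 2) (R := K) (Bm g j) = j := by
  simp [Bm, emb1_constantCoeff _ _ hg0]

lemma Dm_cc (hg0 : PowerSeries.constantCoeff (R := K) g = 0) (i j : K) (hij : i ≠ j) :
    constantCoeff (σ := Fin 2) (R := K) (Am g i - Bm g j) ≠ 0 := by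
  rw [map_sub, Am_cc g hg0, Bm_cc g hg0]
  exact sub_ne_zero_of_ne hij

lemma Sw_Am (i : K) : Sw (Am g i) = Bm g i := by
  rw [Am, Bm, Sw_mul, Sw_C, Sw_sub, Sw_one, Sw_emb1_0]

lemma Sw_Bm (j : K) : Sw (Bm g j) = Am g j := by
  rw [Am, Bm, Sw_mul, Sw_C, Sw_sub, Sw_one, Sw_emb1_1]

lemma slope_cc_ne (hg1 : PowerSeries.coeff (R := K) 1 g ≠ 0) :
    constantCoeff (σ := Fin 2) (R := K) (slope g) ≠ 0 := by
  rwa [slope_constantCoeff]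

lemma hrelArr (hg0 : PowerSeries.constantCoeff (R := K) g = 0) (a b : K) (hq : q ≠ 0)
    (hb2 : b = q ^ 2 * a) :
    MvPowerSeries.C (σ := Fin 2) (R := K) q * Am g a - MvPowerSeries.C (σ := Fin 2) (R := K) q⁻¹ * Bm g b
      = MvPowerSeries.C (σ := Fin 2) (R := K) (q * a) * ((X 1 - X 0) * slope g) := by
  have hkey := slope_key g hg0
  have hconst : q⁻¹ * b = q * a := by
    rw [hb2]; field_simp
  have m1 : MvPowerSeries.C (σ := Fin 2) (R := K) q * MvPowerSeries.C (σ := Fin 2) (R := K) a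
      = MvPowerSeries.C (σ := Fin 2) (R := K) (q * a) := (map_mul _ _ _).symm
  have m2 : MvPowerSeries.C (σ := Fin 2) (R := K) q⁻¹ * MvPowerSeries.C (σ := Fin 2) (R := K) b
      = MvPowerSeries.C (σ := Fin 2) (R := K) (q * a) := by
    rw [← map_mul, hconst]
  rw [Am, Bm]
  linear_combination (-(MvPowerSeries.C (σ := Fin 2) (R := K) (q * a))) * hkey +
    (1 - emb1 0 g) * m1 - (1 - emb1 1 g) * m2

lemma hrelBak (hg0 : PowerSeries.constantCoeff (R := K) g = 0) (a b : K) (hq : q ≠ 0)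
    (hb2 : b = (q ^ 2)⁻¹ * a) :
    MvPowerSeries.C (σ := Fin 2) (R := K) q * Bm g b - MvPowerSeries.C (σ := Fin 2) (R := K) q⁻¹ * Am g a
      = -(MvPowerSeries.C (σ := Fin 2) (R := K) (q * b) * ((X 1 - X 0) * slope g)) := by
  have hkey := slope_key g hg0
  have hconst : q⁻¹ * a = q * b := by
    rw [hb2]; field_simp
  have m1 : MvPowerSeries.C (σ := Fin 2) (R := K) q * MvPowerSeries.C (σ := Fin 2) (R := K) b
      = MvPowerSeries.C (σ := Fin 2) (R := K) (q * b) := (map_mul _ _ _).symm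
  have m2 : MvPowerSeries.C (σ := Fin 2) (R := K) q⁻¹ * MvPowerSeries.C (σ := Fin 2) (R := K) a
      = MvPowerSeries.C (σ := Fin 2) (R := K) (q * b) := by
    rw [← map_mul, hconst]
  rw [Am, Bm]
  linear_combination (MvPowerSeries.C (σ := Fin 2) (R := K) (q * b)) * hkey +
    (1 - emb1 1 g) * m1 - (1 - emb1 0 g) * m2

lemma I1 (hg0 : PowerSeries.constantCoeff (R := K) g = 0) (hg1 : PowerSeries.coeff (R := K) 1 g ≠ 0)
    (a : K) (ha : a ≠ 0) :
    Qd q g a a * (emb1 1 g - emb1 0 g)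
      = MvPowerSeries.C (σ := Fin 2) (R := K) a⁻¹ *
          ((MvPowerSeries.C (σ := Fin 2) (R := K) q⁻¹ * Am g a - MvPowerSeries.C (σ := Fin 2) (R := K) q * Bm g a) *
            (X 1 - X 0)) := by
  have hkey := slope_key g hg0
  have hui := MvPowerSeries.mul_inv_cancel (slope g) (slope_cc_ne g hg1)
  have hCa : MvPowerSeries.C (σ := Fin 2) (R := K) a⁻¹ * MvPowerSeries.C (σ := Fin 2) (R := K) a = 1 := by
    rw [← map_mul, inv_mul_cancel₀ ha, map_one]
  rw [Qd, if_pos rfl, Am, Bm]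
  linear_combination
    (-((MvPowerSeries.C (σ := Fin 2) (R := K) q⁻¹ * (1 - emb1 0 g) -
        MvPowerSeries.C (σ := Fin 2) (R := K) q * (1 - emb1 1 g)) * (slope g)⁻¹)) * hkey +
    ((MvPowerSeries.C (σ := Fin 2) (R := K) q⁻¹ * (1 - emb1 0 g) -
        MvPowerSeries.C (σ := Fin 2) (R := K) q * (1 - emb1 1 g)) * (X 1 - X 0)) * hui +
    (-((MvPowerSeries.C (σ := Fin 2) (R := K) q⁻¹ * (1 - emb1 0 g) -
        MvPowerSeries.C (σ := Fin 2) (R := K) q * (1 - emb1 1 g)) * (X 1 - X 0))) * hCa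

end TwoVar


section TwoVarB

local notation "Cc" => MvPowerSeries.C (σ := Fin 2) (R := K)

variable (q : K) (g : PowerSeries K)

lemma I2non (hg0 : PowerSeries.constantCoeff (R := K) g = 0) (hq : q ≠ 0)
    (a b : K) (hnn : qnon q a b) :
    Sw (Qd q g b a) * Qd q g a b * ((Am g a - Bm g b) * (Bm g b - Am g a))
      = (Cc q * Am g a - Cc q⁻¹ * Bm g b) * (Cc q * Bm g b - Cc q⁻¹ * Am g a) := by
  obtain ⟨hne, h2, h3⟩ := hnn
  have hba : ¬ a = q ^ 2 * b := by
    intro hc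
    apply h3
    rw [hc]
    field_simp
  have hQab : Qd q g a b = (Cc q * Am g a - Cc q⁻¹ * Bm g b) * (Am g a - Bm g b)⁻¹ := by
    rw [Qd, if_neg hne, if_neg h2]
  have hQba : Qd q g b a = (Cc q * Am g b - Cc q⁻¹ * Bm g a) * (Am g b - Bm g a)⁻¹ := by
    rw [Qd, if_neg (Ne.symm hne), if_neg hba]
  have hcc : constantCoeff (σ := Fin 2) (R := K) (Am g b - Bm g a) ≠ 0 := Dm_cc g hg0 b a (Ne.symm hne)
  have hSw : Sw (Qd q g b a)
      = (Cc q * Bm g b - Cc q⁻¹ * Am g a) * (Bm g b - Am g a)⁻¹ := by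
    rw [hQba, Sw_mul, Sw_inv _ hcc]
    simp only [Sw_sub, Sw_mul, Sw_C, Sw_Am, Sw_Bm]
  have h1 := MvPowerSeries.mul_inv_cancel _ (Dm_cc g hg0 a b hne)
  have h4 : constantCoeff (σ := Fin 2) (R := K) (Bm g b - Am g a) ≠ 0 := by
    rw [map_sub, Am_cc g hg0, Bm_cc g hg0]
    exact sub_ne_zero_of_ne (Ne.symm hne)
  have h5 := MvPowerSeries.mul_inv_cancel _ h4
  rw [hSw, hQab]
  linear_combination
    (((Cc q * Am g a - Cc q⁻¹ * Bm g b) * (Cc q * Bm g b - Cc q⁻¹ * Am g a)) *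
      (Bm g b - Am g a) * (Bm g b - Am g a)⁻¹) * h1 +
    ((Cc q * Am g a - Cc q⁻¹ * Bm g b) * (Cc q * Bm g b - Cc q⁻¹ * Am g a)) * h5

lemma I2bak (hg0 : PowerSeries.constantCoeff (R := K) g = 0) (hq : q ≠ 0) (hq2 : q ^ 2 ≠ 1)
    (a b : K) (ha : a ≠ 0) (hbk : qbak q a b) :
    Sw (Qd q g b a) * Qd q g a b *
        ((X 1 - X 0) * ((Am g a - Bm g b) * (Bm g b - Am g a)))
      = (Cc q * Am g a - Cc q⁻¹ * Bm g b) * (Cc q * Bm g b - Cc q⁻¹ * Am g a) := by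
  obtain ⟨hb2, hnb⟩ := hbk
  have hne : a ≠ b := by
    intro hc
    apply hq2
    have h6 : q ^ 2 * b = a := by rw [hb2]; field_simp
    rw [← hc] at h6
    exact mul_right_cancel₀ ha (by rw [h6, one_mul])
  have ha2 : a = q ^ 2 * b := by rw [hb2]; field_simp
  have hQab : Qd q g a b = (Cc q * Am g a - Cc q⁻¹ * Bm g b) * (Am g a - Bm g b)⁻¹ := by
    rw [Qd, if_neg hne, if_neg hnb]
  have hQba : Qd q g b a = -(Cc (q * b) * slope g * (Am g b - Bm g a)⁻¹) := by
    rw [Qd, if_neg (Ne.symm hne), if_pos ha2]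
  have hcc : constantCoeff (σ := Fin 2) (R := K) (Am g b - Bm g a) ≠ 0 := Dm_cc g hg0 b a (Ne.symm hne)
  have hSw : Sw (Qd q g b a) = -(Cc (q * b) * slope g * (Bm g b - Am g a)⁻¹) := by
    rw [hQba, Sw_neg, Sw_mul, Sw_inv _ hcc]
    simp only [Sw_sub, Sw_mul, Sw_C, Sw_Am, Sw_Bm, Sw_slope]
  have h1 := MvPowerSeries.mul_inv_cancel _ (Dm_cc g hg0 a b hne)
  have h4 : constantCoeff (σ := Fin 2) (R := K) (Bm g b - Am g a) ≠ 0 := by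
    rw [map_sub, Am_cc g hg0, Bm_cc g hg0]
    exact sub_ne_zero_of_ne (Ne.symm hne)
  have h5 := MvPowerSeries.mul_inv_cancel _ h4
  have hrel := hrelBak q g hg0 a b hq hb2
  rw [hSw, hQab, hrel]
  linear_combination
    ((-(Cc (q * b) * slope g * (Cc q * Am g a - Cc q⁻¹ * Bm g b) * (X 1 - X 0))) *
      (Bm g b - Am g a) * (Bm g b - Am g a)⁻¹) * h1 +
    (-(Cc (q * b) * slope g * (Cc q * Am g a - Cc q⁻¹ * Bm g b) * (X 1 - X 0))) * h5

lemma I2arr (hg0 : PowerSeries.constantCoeff (R := K) g = 0) (hq : q ≠ 0) (hq2 : q ^ 2 ≠ 1)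
    (a b : K) (ha : a ≠ 0) (harr : qarr q a b) :
    Sw (Qd q g b a) * Qd q g a b *
        ((X 0 - X 1) * ((Am g a - Bm g b) * (Bm g b - Am g a)))
      = (Cc q * Am g a - Cc q⁻¹ * Bm g b) * (Cc q * Bm g b - Cc q⁻¹ * Am g a) := by
  obtain ⟨hb2, hnb⟩ := harr
  have hne : a ≠ b := by
    intro hc
    apply hq2
    rw [← hc] at hb2
    exact (mul_right_cancel₀ ha (by rw [← hb2, one_mul])).symm
  have hba : ¬ a = q ^ 2 * b := by
    intro hc
    apply hnb
    rw [hc]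
    field_simp
  have hQab : Qd q g a b = -(Cc (q * a) * slope g * (Am g a - Bm g b)⁻¹) := by
    rw [Qd, if_neg hne, if_pos hb2]
  have hQba : Qd q g b a = (Cc q * Am g b - Cc q⁻¹ * Bm g a) * (Am g b - Bm g a)⁻¹ := by
    rw [Qd, if_neg (Ne.symm hne), if_neg hba]
  have hcc : constantCoeff (σ := Fin 2) (R := K) (Am g b - Bm g a) ≠ 0 := Dm_cc g hg0 b a (Ne.symm hne)
  have hSw : Sw (Qd q g b a)
      = (Cc q * Bm g b - Cc q⁻¹ * Am g a) * (Bm g b - Am g a)⁻¹ := by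
    rw [hQba, Sw_mul, Sw_inv _ hcc]
    simp only [Sw_sub, Sw_mul, Sw_C, Sw_Am, Sw_Bm]
  have h1 := MvPowerSeries.mul_inv_cancel _ (Dm_cc g hg0 a b hne)
  have h4 : constantCoeff (σ := Fin 2) (R := K) (Bm g b - Am g a) ≠ 0 := by
    rw [map_sub, Am_cc g hg0, Bm_cc g hg0]
    exact sub_ne_zero_of_ne (Ne.symm hne)
  have h5 := MvPowerSeries.mul_inv_cancel _ h4
  have hrel := hrelArr q g hg0 a b hq hb2
  rw [hSw, hQab, hrel]
  linear_combination
    ((Cc (q * a) * slope g * (Cc q * Bm g b - Cc q⁻¹ * Am g a) * (X 1 - X 0)) *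
      (Bm g b - Am g a) * (Bm g b - Am g a)⁻¹) * h1 +
    ((Cc (q * a) * slope g * (Cc q * Bm g b - Cc q⁻¹ * Am g a) * (X 1 - X 0))) * h5

lemma I2dbl (hg0 : PowerSeries.constantCoeff (R := K) g = 0) (hq : q ≠ 0) (hq2 : q ^ 2 ≠ 1)
    (a b : K) (ha : a ≠ 0) (hdb : qdbl q a b) :
    Sw (Qd q g b a) * Qd q g a b *
        ((X 1 - X 0) * ((X 0 - X 1) * ((Am g a - Bm g b) * (Bm g b - Am g a))))
      = (Cc q * Am g a - Cc q⁻¹ * Bm g b) * (Cc q * Bm g b - Cc q⁻¹ * Am g a) := by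
  obtain ⟨hb2, hb3⟩ := hdb
  have hne : a ≠ b := by
    intro hc
    apply hq2
    rw [← hc] at hb2
    exact (mul_right_cancel₀ ha (by rw [← hb2, one_mul])).symm
  have ha2 : a = q ^ 2 * b := by rw [hb3]; field_simp
  have hQab : Qd q g a b = -(Cc (q * a) * slope g * (Am g a - Bm g b)⁻¹) := by
    rw [Qd, if_neg hne, if_pos hb2]
  have hQba : Qd q g b a = -(Cc (q * b) * slope g * (Am g b - Bm g a)⁻¹) := by
    rw [Qd, if_neg (Ne.symm hne), if_pos ha2]
  have hcc : constantCoeff (σ := Fin 2) (R := K) (Am g b - Bm g a) ≠ 0 := Dm_cc g hg0 b a (Ne.symm hne)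
  have hSw : Sw (Qd q g b a) = -(Cc (q * b) * slope g * (Bm g b - Am g a)⁻¹) := by
    rw [hQba, Sw_neg, Sw_mul, Sw_inv _ hcc]
    simp only [Sw_sub, Sw_mul, Sw_C, Sw_Am, Sw_Bm, Sw_slope]
  have h1 := MvPowerSeries.mul_inv_cancel _ (Dm_cc g hg0 a b hne)
  have h4 : constantCoeff (σ := Fin 2) (R := K) (Bm g b - Am g a) ≠ 0 := by
    rw [map_sub, Am_cc g hg0, Bm_cc g hg0]
    exact sub_ne_zero_of_ne (Ne.symm hne)
  have h5 := MvPowerSeries.mul_inv_cancel _ h4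
  have hrel1 := hrelArr q g hg0 a b hq hb2
  have hrel2 := hrelBak q g hg0 a b hq hb3
  rw [hSw, hQab, hrel1, hrel2]
  linear_combination
    ((-(Cc (q * a) * Cc (q * b) * slope g * slope g * (X 1 - X 0) * (X 1 - X 0))) *
      (Bm g b - Am g a) * (Bm g b - Am g a)⁻¹) * h1 +
    (-(Cc (q * a) * Cc (q * b) * slope g * slope g * (X 1 - X 0) * (X 1 - X 0))) * h5

lemma Qd_unit (hg0 : PowerSeries.constantCoeff (R := K) g = 0) (hg1 : PowerSeries.coeff (R := K) 1 g ≠ 0)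
    (hq : q ≠ 0) (hq2 : q ^ 2 ≠ 1) (a b : K) (ha : a ≠ 0) (hb : b ≠ 0) :
    IsUnit (Qd q g a b) := by
  rw [MvPowerSeries.isUnit_iff_constantCoeff, isUnit_iff_ne_zero, Qd]
  by_cases hab : a = b
  · rw [if_pos hab, map_mul, MvPowerSeries.constantCoeff_inv]
    apply mul_ne_zero
    · simp only [map_sub, map_mul, map_one, MvPowerSeries.constantCoeff_C,
        emb1_constantCoeff _ _ hg0, sub_zero, mul_one]
      intro h
      apply hq2
      have h2 : q⁻¹ = q := sub_eq_zero.mp h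
      have h3 : q * q⁻¹ = q * q := by rw [h2]
      rw [mul_inv_cancel₀ hq] at h3
      rw [pow_two, ← h3]
    · rw [slope_constantCoeff]
      exact inv_ne_zero hg1
  · rw [if_neg hab]
    have hdm : constantCoeff (σ := Fin 2) (R := K) (Am g a - Bm g b) ≠ 0 := Dm_cc g hg0 a b hab
    by_cases h2 : b = q ^ 2 * a
    · rw [if_pos h2, map_neg, map_mul, map_mul, MvPowerSeries.constantCoeff_C,
        slope_constantCoeff, MvPowerSeries.constantCoeff_inv]
      apply neg_ne_zero.mpr
      exact mul_ne_zero (mul_ne_zero (mul_ne_zero hq ha) hg1) (inv_ne_zero hdm)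
    · rw [if_neg h2, map_mul, MvPowerSeries.constantCoeff_inv]
      apply mul_ne_zero
      · rw [map_sub, map_mul, map_mul, MvPowerSeries.constantCoeff_C,
          MvPowerSeries.constantCoeff_C, Am_cc g hg0, Bm_cc g hg0]
        intro h
        apply h2
        have h3 : q * a = q⁻¹ * b := by linear_combination h
        field_simp at h3
        rw [← h3]
      · exact inv_ne_zero hdm

end TwoVarB


section NLevel

variable {n : ℕ} (q : K) (g : PowerSeries K)

lemma lo_ne_hi (c : Fin (n - 1)) : lo c ≠ hi c := by
  intro h
  have := congrArg Fin.val h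
  simp [lo, hi] at this

lemma sw_eq (c : Fin (n - 1)) (i : Fin n → K) :
    sw c i = i ∘ Equiv.swap (lo c) (hi c) := rfl

lemma sw_lo (c : Fin (n - 1)) (i : Fin n → K) : sw c i (lo c) = i (hi c) := by
  rw [sw_eq]
  show i (Equiv.swap (lo c) (hi c) (lo c)) = _
  rw [Equiv.swap_apply_left]

lemma sw_hi (c : Fin (n - 1)) (i : Fin n → K) : sw c i (hi c) = i (lo c) := by
  rw [sw_eq]
  show i (Equiv.swap (lo c) (hi c) (hi c)) = _
  rw [Equiv.swap_apply_right]

lemma QQ2_eq (c : Fin (n - 1)) (i : Fin n → K) :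
    QQ2 (fun _ a b => Qd q g a b) c i
      = emb2 (lo c) (hi c)
          (Sw (Qd q g (i (hi c)) (i (lo c))) * Qd q g (i (lo c)) (i (hi c))) := by
  rw [QQ2, Qev, Qev, sw_lo, sw_hi, permPS_emb2, Equiv.swap_inv, Equiv.swap_apply_left,
    Equiv.swap_apply_right, emb2_swap, ← emb2_mul _ _ (lo_ne_hi c)]

end NLevel


end Statement10Aux

/-- Lemma 6.1.  There exists a family of invertible power series
`Q_k(i,j) ∈ K[[z,z']]` satisfying conditions (★1)–(★3). -/
theorem statement10 {K : Type} [Field K] (q : K) (hq : q ≠ 0) (hq2 : q ^ 2 ≠ 1)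
    (S : Set K) (hS0 : ∀ s ∈ S, s ≠ 0)
    (hSq : ∀ s ∈ S, q ^ 2 * s ∈ S ∧ (q ^ 2)⁻¹ * s ∈ S) (hSinv : ∀ s ∈ S, s⁻¹ ∈ S)
    (f g : PowerSeries K) (hf0 : PowerSeries.constantCoeff (R := K) f = 0)
    (hf1 : IsUnit (PowerSeries.coeff (R := K) 1 f)) (hg0 : PowerSeries.constantCoeff (R := K) g = 0)
    (hfg : comp1 f g = PowerSeries.X) (hgf : comp1 g f = PowerSeries.X)
    (n : ℕ) :
    ∃ Q : Fin (n - 1) → K → K → MvPowerSeries (Fin 2) K,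
      (∀ c : Fin (n - 1), ∀ i ∈ S, ∀ j ∈ S, IsUnit (Q c i j)) ∧
      Star1 q g S n Q ∧ Star2 q g S n Q ∧ Star3 S n Q := by
  have hg1 : PowerSeries.coeff (R := K) 1 g ≠ 0 := g1_ne hfg
  refine ⟨fun _ a b => Qd q g a b, ?_, ?_, ?_, ?_⟩
  · intro c a haS b hbS
    exact Qd_unit q g hg0 hg1 hq hq2 a b (hS0 a haS) (hS0 b hbS)
  · intro i hmem c hEq
    have hab := lo_ne_hi (c := c)
    have ha : i (lo c) ≠ 0 := hS0 _ (hmem _)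
    have h3 := congrArg (emb2 (lo c) (hi c)) (I1 q g hg0 hg1 (i (lo c)) ha)
    simp only [emb2_mul _ _ hab, emb2_sub, emb2_C, emb2_one, emb2_X0 _ _ hab,
      emb2_X1 _ _ hab, emb2_emb1_0 _ _ hab, emb2_emb1_1 _ _ hab, Am, Bm] at h3
    simp only [Qev, XofI]
    rw [← hEq]
    linear_combination h3
  · intro i hmem c
    have hab := lo_ne_hi (c := c)
    have ha : i (lo c) ≠ 0 := hS0 _ (hmem _)
    have hb : i (hi c) ≠ 0 := hS0 _ (hmem _)
    refine ⟨?_, ?_, ?_, ?_⟩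
    · intro hcase
      have h3 := congrArg (emb2 (lo c) (hi c))
        (I2non q g hg0 hq (i (lo c)) (i (hi c)) hcase)
      simp only [emb2_mul _ _ hab, emb2_sub, emb2_C, emb2_one, emb2_X0 _ _ hab,
        emb2_X1 _ _ hab, emb2_emb1_0 _ _ hab, emb2_emb1_1 _ _ hab, Am, Bm] at h3
      rw [QQ2_eq q g c i]
      simp only [DD2, NN2, XofI, emb2_mul _ _ hab]
      linear_combination h3
    · intro hcase
      have h3 := congrArg (emb2 (lo c) (hi c))
        (I2bak q g hg0 hq hq2 (i (lo c)) (i (hi c)) ha hcase)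
      simp only [emb2_mul _ _ hab, emb2_sub, emb2_C, emb2_one, emb2_X0 _ _ hab,
        emb2_X1 _ _ hab, emb2_emb1_0 _ _ hab, emb2_emb1_1 _ _ hab, Am, Bm] at h3
      rw [QQ2_eq q g c i]
      simp only [DD2, NN2, XofI, emb2_mul _ _ hab]
      linear_combination h3
    · intro hcase
      have h3 := congrArg (emb2 (lo c) (hi c))
        (I2arr q g hg0 hq hq2 (i (lo c)) (i (hi c)) ha hcase)
      simp only [emb2_mul _ _ hab, emb2_sub, emb2_C, emb2_one, emb2_X0 _ _ hab,
        emb2_X1 _ _ hab, emb2_emb1_0 _ _ hab, emb2_emb1_1 _ _ hab, Am, Bm] at h3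
      rw [QQ2_eq q g c i]
      simp only [DD2, NN2, XofI, emb2_mul _ _ hab]
      linear_combination h3
    · intro hcase
      have h3 := congrArg (emb2 (lo c) (hi c))
        (I2dbl q g hg0 hq hq2 (i (lo c)) (i (hi c)) ha hcase)
      simp only [emb2_mul _ _ hab, emb2_sub, emb2_C, emb2_one, emb2_X0 _ _ hab,
        emb2_X1 _ _ hab, emb2_emb1_0 _ _ hab, emb2_emb1_1 _ _ hab, Am, Bm] at h3
      rw [QQ2_eq q g c i]
      simp only [DD2, NN2, XofI, emb2_mul _ _ hab]
      linear_combination h3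
  · intro i hmem c c' hcc
    have hlo' : lo c' = hi c := by
      apply Fin.ext
      simp [lo, hi, hcc]
    have hne1 : hi c' ≠ lo c := by
      intro h
      have := congrArg Fin.val h
      simp [lo, hi, hcc] at this
      omega
    have hne2 : hi c' ≠ hi c := by
      intro h
      have := congrArg Fin.val h
      simp [lo, hi, hcc] at this
    have hne3 : lo c ≠ lo c' := by
      intro h
      have := congrArg Fin.val h
      simp [lo, hi, hcc] at this
    have hne4 : lo c ≠ hi c' := Ne.symm hne1
    have e1 : sw c' (sw c i) (lo c') = i (hi c') := by
      rw [sw_eq c' (sw c i)]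
      show sw c i (Equiv.swap (lo c') (hi c') (lo c')) = _
      rw [Equiv.swap_apply_left, sw_eq c i]
      show i (Equiv.swap (lo c) (hi c) (hi c')) = _
      rw [Equiv.swap_apply_of_ne_of_ne hne1 hne2]
    have e2 : sw c' (sw c i) (hi c') = i (lo c) := by
      rw [sw_eq c' (sw c i)]
      show sw c i (Equiv.swap (lo c') (hi c') (hi c')) = _
      rw [Equiv.swap_apply_right, hlo', sw_hi]
    have e3 : sw c (sw c' i) (lo c) = i (hi c') := by
      rw [sw_eq c (sw c' i)]
      show sw c' i (Equiv.swap (lo c) (hi c) (lo c)) = _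
      rw [Equiv.swap_apply_left, ← hlo', sw_lo]
    have e4 : sw c (sw c' i) (hi c) = i (lo c) := by
      rw [sw_eq c (sw c' i)]
      show sw c' i (Equiv.swap (lo c) (hi c) (hi c)) = _
      rw [Equiv.swap_apply_right, sw_eq c' i]
      show i (Equiv.swap (lo c') (hi c') (lo c)) = _
      rw [Equiv.swap_apply_of_ne_of_ne hne3 hne4]
    have f1 : Equiv.swap (lo c) (hi c) (lo c') = lo c := by
      rw [hlo', Equiv.swap_apply_right]
    have f2 : Equiv.swap (lo c) (hi c) (hi c') = hi c' :=
      Equiv.swap_apply_of_ne_of_ne hne1 hne2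
    have f3 : Equiv.swap (lo c') (hi c') (lo c) = lo c :=
      Equiv.swap_apply_of_ne_of_ne hne3 hne4
    have f4 : Equiv.swap (lo c') (hi c') (hi c) = hi c' := by
      rw [← hlo', Equiv.swap_apply_left]
    rw [Qev, Qev, e1, e2, e3, e4, permPS_emb2, permPS_emb2, Equiv.swap_inv, Equiv.swap_inv,
      f1, f2, f3, f4]


end PdAW
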